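/- There are constants c, C > 0 such that the following holds. Let H be a finite simple graph with n ≥ 2 vertices in which every vertex has degree at least h, where h ≥ 1 is an integer, and set φ = c/log₂ n. Then there is a collection F = {K₁, …, K_t} of vertex-disjoint induced subgraphs of H (called cores) with t ≤ C·n·(log₂ n)/h, such that: (i) every K ∈ F is a φ-expander, every vertex u ∈ V(K) satisfies deg_K(u) ≥ φ·h/3, and any two vertices of K are at distance at most C·(log₂ n)/φ in K; and (ii) for every vertex u of H not belonging to any core in F, there exists a family of at least 2h/3 pairwise edge-disjoint paths in H, each of length at most C·log₂ n and each joining u to some vertex lying in ⋃_{K∈F} V(K). -/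

import Mathlib

set_option linter.unusedSectionVars false
set_option maxHeartbeats 1000000


open Finset
open scoped Classical

noncomputable section

universe u

variable {V : Type*} [Fintype V]

/-- The degree of the vertex `v` in the graph `G`. -/
def gdeg (G : SimpleGraph V) (v : V) : ℕ :=
  (Finset.univ.filter fun u => G.Adj v u).card

/-- The degree of the vertex `v` in the induced subgraph `G[W]`:
the number of `G`-neighbors of `v` inside `W`. -/
def gdegIn (G : SimpleGraph V) (W : Finset V) (v : V) : ℕ :=
  (W.filter fun u => G.Adj v u).card

/-- The volume of `S` in the induced subgraph `G[W]`. -/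
def gvolIn (G : SimpleGraph V) (W S : Finset V) : ℕ := ∑ v ∈ S, gdegIn G W v

/-- The number of edges of the induced subgraph `G[W]` with exactly one endpoint
in `S` (the other endpoint lying in `W \ S`). -/
def gcutIn (G : SimpleGraph V) (W S : Finset V) : ℕ :=
  (Finset.univ.filter fun p : V × V =>
    p.1 ∈ S ∧ p.2 ∈ W ∧ p.2 ∉ S ∧ G.Adj p.1 p.2).card

/-- The induced subgraph `G[W]` is a `φ`-expander. -/
def IsInducedExpander (G : SimpleGraph V) (W : Finset V) (φ : ℝ) : Prop :=
  ∀ S ⊆ W, S.Nonempty → (W \ S).Nonempty →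
    φ * min (gvolIn G W S : ℝ) (gvolIn G W (W \ S) : ℝ) ≤ (gcutIn G W S : ℝ)

-- ## Part 0 : basic counting lemmas

lemma gdegIn_mono (G : SimpleGraph V) {W W' : Finset V} (h : W ⊆ W') (v : V) :
    gdegIn G W v ≤ gdegIn G W' v :=
  Finset.card_le_card (Finset.filter_subset_filter _ h)

lemma gdegIn_le_card (G : SimpleGraph V) (W : Finset V) (v : V) :
    gdegIn G W v ≤ W.card :=
  Finset.card_le_card (Finset.filter_subset _ _)

lemma gdegIn_le_gdeg (G : SimpleGraph V) (W : Finset V) (v : V) :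
    gdegIn G W v ≤ gdeg G v :=
  gdegIn_mono G (Finset.subset_univ W) v

lemma gvolIn_mono_left (G : SimpleGraph V) {W W' : Finset V} (h : W ⊆ W') (S : Finset V) :
    gvolIn G W S ≤ gvolIn G W' S :=
  Finset.sum_le_sum fun v _ => gdegIn_mono G h v

lemma gvolIn_mono_right (G : SimpleGraph V) (W : Finset V) {S S' : Finset V} (h : S ⊆ S') :
    gvolIn G W S ≤ gvolIn G W S' :=
  Finset.sum_le_sum_of_subset h

lemma gcutIn_eq_sum (G : SimpleGraph V) (W S : Finset V) :
    gcutIn G W S = ∑ x ∈ S, gdegIn G (W \ S) x := by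
  classical
  have hset : (Finset.univ.filter fun p : V × V =>
      p.1 ∈ S ∧ p.2 ∈ W ∧ p.2 ∉ S ∧ G.Adj p.1 p.2)
      = S.biUnion (fun x => ((W \ S).filter (fun y => G.Adj x y)).image (fun y => (x, y))) := by
    ext ⟨x, y⟩
    simp only [Finset.mem_filter, Finset.mem_univ, true_and, Finset.mem_biUnion,
      Finset.mem_image, Finset.mem_sdiff, Prod.mk.injEq]
    constructor
    · rintro ⟨hx, hyW, hyS, hadj⟩
      exact ⟨x, hx, y, ⟨⟨hyW, hyS⟩, hadj⟩, rfl, rfl⟩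
    · rintro ⟨a, ha, b, ⟨⟨hbW, hbS⟩, hadj⟩, rfl, rfl⟩
      exact ⟨ha, hbW, hbS, hadj⟩
  rw [gcutIn, hset, Finset.card_biUnion]
  · refine Finset.sum_congr rfl fun x _ => ?_
    rw [Finset.card_image_of_injective _ (fun a b hab => by injection hab)]
    rfl
  · intro a _ b _ hab
    simp only [Finset.disjoint_left, Finset.mem_image]
    rintro p ⟨y, _, rfl⟩ ⟨z, _, hz⟩
    exact hab (by injection hz with h1 _; exact h1.symm)

lemma gcutIn_symm (G : SimpleGraph V) {W S : Finset V} (hS : S ⊆ W) :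
    gcutIn G W S = gcutIn G W (W \ S) := by
  classical
  unfold gcutIn
  apply Finset.card_bij (fun p _ => (p.2, p.1))
  · rintro ⟨x, y⟩ hp
    simp only [Finset.mem_filter, Finset.mem_univ, true_and, Finset.mem_sdiff] at hp ⊢
    obtain ⟨hx, hyW, hyS, hadj⟩ := hp
    exact ⟨⟨hyW, hyS⟩, hS hx, fun hc => hc.2 hx, hadj.symm⟩
  · rintro ⟨x, y⟩ hp ⟨x', y'⟩ hp' h
    simp only [Prod.mk.injEq] at h
    exact Prod.ext h.2 h.1
  · rintro ⟨x, y⟩ hp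
    simp only [Finset.mem_filter, Finset.mem_univ, true_and, Finset.mem_sdiff] at hp
    obtain ⟨⟨hxW, hxS⟩, hyW, hyWS, hadj⟩ := hp
    refine ⟨(y, x), ?_, rfl⟩
    simp only [Finset.mem_filter, Finset.mem_univ, true_and, Finset.mem_sdiff]
    have hyS : y ∈ S := by
      by_contra hc
      exact hyWS ⟨hyW, hc⟩
    exact ⟨hyS, hxW, hxS, hadj.symm⟩

lemma gdegIn_split (G : SimpleGraph V) {A W : Finset V} (h : A ⊆ W) (v : V) :
    gdegIn G W v = gdegIn G A v + gdegIn G (W \ A) v := by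
  classical
  unfold gdegIn
  rw [← Finset.card_union_of_disjoint, ← Finset.filter_union,
    Finset.union_sdiff_of_subset h]
  exact Finset.disjoint_filter_filter (Finset.disjoint_sdiff)

lemma gvolIn_split (G : SimpleGraph V) {A W : Finset V} (h : A ⊆ W) :
    gvolIn G W W = (gvolIn G A A + gvolIn G (W \ A) (W \ A)) + 2 * gcutIn G W A := by
  classical
  have hWA : W \ (W \ A) = A := by
    rw [Finset.sdiff_sdiff_self_left]
    exact Finset.inter_eq_right.mpr h
  have key : gvolIn G W W = ∑ v ∈ A, gdegIn G W v + ∑ v ∈ W \ A, gdegIn G W v := by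
    rw [gvolIn, ← Finset.sum_union Finset.sdiff_disjoint.symm, Finset.union_sdiff_of_subset h]
  rw [key]
  have hsplit : ∀ v, gdegIn G W v = gdegIn G A v + gdegIn G (W \ A) v := gdegIn_split G h
  have h1 : ∑ v ∈ A, gdegIn G W v = gvolIn G A A + gcutIn G W A := by
    rw [gcutIn_eq_sum]
    rw [Finset.sum_congr rfl fun v _ => hsplit v, Finset.sum_add_distrib]
    rfl
  have h2 : ∑ v ∈ W \ A, gdegIn G W v = gvolIn G (W \ A) (W \ A) + gcutIn G W A := by
    rw [gcutIn_symm G h, gcutIn_eq_sum, hWA]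
    rw [Finset.sum_congr rfl fun v _ => hsplit v, Finset.sum_add_distrib]
    rw [Nat.add_comm]
    rfl
  rw [h1, h2]
  ring


-- x lg x monotone
lemma xlgx_mono {x y : ℝ} (hx : 1 ≤ x) (hxy : x ≤ y) :
    x * Real.logb 2 x ≤ y * Real.logb 2 y := by
  have h0 : (0:ℝ) ≤ Real.logb 2 x := Real.logb_nonneg one_lt_two hx
  have h1 : Real.logb 2 x ≤ Real.logb 2 y :=
    (Real.logb_le_logb one_lt_two (by linarith) (by linarith)).mpr hxy
  exact mul_le_mul hxy h1 h0 (by linarith)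

lemma gvolIn_erase (G : SimpleGraph V) {W : Finset V} {v : V} (hv : v ∈ W) :
    gvolIn G W W = gvolIn G (W.erase v) (W.erase v) + 2 * gdegIn G W v := by
  have h1 : ({v} : Finset V) ⊆ W := Finset.singleton_subset_iff.mpr hv
  have h2 := gvolIn_split G h1
  have h3 : W \ {v} = W.erase v := (Finset.sdiff_singleton_eq_erase v W).symm ▸ rfl
  have h4 : gvolIn G ({v} : Finset V) ({v} : Finset V) = 0 := by
    simp [gvolIn, gdegIn, Finset.filter_singleton, G.irrefl]
  have h5 : gcutIn G W ({v} : Finset V) = gdegIn G W v := by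
    have e1 : gcutIn G W ({v} : Finset V) = ∑ x ∈ ({v} : Finset V), gdegIn G (W \ {v}) x :=
      gcutIn_eq_sum G W {v}
    rw [e1, Finset.sum_singleton]
    unfold gdegIn
    congr 1
    ext y
    simp only [Finset.mem_filter, Finset.mem_sdiff, Finset.mem_singleton]
    constructor
    · rintro ⟨⟨hy, _⟩, hadj⟩; exact ⟨hy, hadj⟩
    · rintro ⟨hy, hadj⟩
      exact ⟨⟨hy, fun he => G.irrefl (he ▸ hadj)⟩, hadj⟩
  rw [h2, h4, h5, h3]
  ring_nf

/-- Lemma A : extremal expander core. -/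
lemma lemmaA (G : SimpleGraph V) (U : Finset V)
    (hw : ∀ v ∈ U, 1 ≤ gdegIn G U v) (hne : U.Nonempty) :
    ∃ W ⊆ U, W.Nonempty ∧
      (∀ v ∈ W, (gdegIn G U v : ℝ) ≤ 4 * gdegIn G W v) ∧
      (∀ S ⊆ W, S.Nonempty → (W \ S).Nonempty →
        (1 / (8 * Real.logb 2 (gvolIn G U U))) *
          min (gvolIn G W S : ℝ) (gvolIn G W (W \ S) : ℝ) ≤ (gcutIn G W S : ℝ)) := by
  classical
  set w : V → ℕ := fun v => gdegIn G U v with hwdef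
  set sU : ℕ := gvolIn G U U with hsU
  -- σ U ≥ 2
  obtain ⟨u0, hu0⟩ := hne
  have hne' : U.Nonempty := ⟨u0, hu0⟩
  have hcard2 : 2 ≤ sU := by
    have h1 : 1 ≤ w u0 := hw u0 hu0
    obtain ⟨x, hx⟩ : ∃ x, x ∈ U.filter (fun u => G.Adj u0 u) := Finset.card_pos.mp h1
    simp only [Finset.mem_filter] at hx
    have hxU : x ∈ U := hx.1
    have hxu0 : x ≠ u0 := fun he => G.irrefl (he ▸ hx.2)
    have : ({u0, x} : Finset V) ⊆ U := by
      intro y hy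
      simp only [Finset.mem_insert, Finset.mem_singleton] at hy
      rcases hy with rfl | rfl
      exacts [hu0, hxU]
    calc 2 = ∑ v ∈ ({u0, x} : Finset V), 1 := by
            rw [Finset.sum_const, Finset.card_insert_of_notMem (by simpa using hxu0.symm),
              Finset.card_singleton]
            rfl
          _ ≤ ∑ v ∈ ({u0, x} : Finset V), w v := Finset.sum_le_sum fun v hv => hw v (this hv)
          _ ≤ ∑ v ∈ U, w v := Finset.sum_le_sum_of_subset this
          _ = sU := rfl
  have hsUR : (2:ℝ) ≤ (sU:ℝ) := by exact_mod_cast hcard2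
  have hLU1 : 1 ≤ Real.logb 2 (sU:ℝ) := by
    have h2 : Real.logb 2 (2:ℝ) = 1 := Real.logb_self_eq_one one_lt_two
    rw [← h2]
    exact (Real.logb_le_logb one_lt_two (by norm_num) (by linarith)).mpr hsUR
  set LU : ℝ := Real.logb 2 (sU:ℝ) with hLUdef
  set l : ℝ := 1 / (4 * LU) with hldef
  have hLUpos : 0 < LU := by linarith
  have hlpos : 0 < l := by positivity
  have hlLU : l * LU = 1/4 := by
    rw [hldef]; field_simp
  have hl14 : l ≤ 1/4 := by
    calc l = l * 1 := (mul_one l).symm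
      _ ≤ l * LU := by nlinarith
      _ = 1/4 := hlLU
  -- the weight of a finset
  set sig : Finset V → ℕ := fun T => ∑ v ∈ T, w v with hsigdef
  have hsigU : sig U = sU := rfl
  have hsig_lb : ∀ T : Finset V, T ⊆ U → T.Nonempty → 1 ≤ sig T := by
    intro T hTU ⟨x, hx⟩
    calc 1 ≤ w x := hw x (hTU hx)
      _ ≤ sig T := Finset.single_le_sum (fun v _ => Nat.zero_le _) hx
  -- Q predicate and the minimal candidate
  set Q : Finset V → Prop := fun T => T.Nonempty ∧ T ⊆ U ∧
      (sig T : ℝ) * (1 - l * (LU - Real.logb 2 (sig T : ℝ))) ≤ (gvolIn G T T : ℝ) with hQdef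
  have hQU : Q U := by
    refine ⟨hne', subset_rfl, ?_⟩
    rw [hsigU]
    have heq : (sU:ℝ) * (1 - l * (LU - Real.logb 2 (sU:ℝ))) = (sU:ℝ) := by
      rw [← hLUdef]; ring
    rw [heq]
  obtain ⟨W, hWmem, hWmin'⟩ := Finset.exists_min_image
    (Finset.univ.filter fun T => Q T) (fun T => sig T) ⟨U, Finset.mem_filter.mpr ⟨Finset.mem_univ U, hQU⟩⟩
  have hQW : Q W := (Finset.mem_filter.mp hWmem).2
  have hWmin : ∀ T : Finset V, Q T → sig W ≤ sig T := by
    intro T hT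
    exact hWmin' T (Finset.mem_filter.mpr ⟨Finset.mem_univ T, hT⟩)
  obtain ⟨hWne, hWU, hWineq⟩ := hQW
  have hsigW1 : 1 ≤ sig W := hsig_lb W hWU hWne
  have hsigWR : (1:ℝ) ≤ (sig W : ℝ) := by exact_mod_cast hsigW1
  have hlgW0 : 0 ≤ Real.logb 2 (sig W : ℝ) := Real.logb_nonneg one_lt_two hsigWR
  -- degree claim
  have hdeg : ∀ v ∈ W, (w v : ℝ) ≤ 4 * gdegIn G W v := by
    intro v hv
    by_contra hcon
    push_neg at hcon
    have hw1 : 1 ≤ w v := hw v (hWU hv)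
    have hg0 : (0:ℝ) ≤ (gdegIn G W v : ℝ) := Nat.cast_nonneg _
    have herase : sig (W.erase v) + w v = sig W := Finset.sum_erase_add W w hv
    rcases Finset.eq_empty_or_nonempty (W.erase v) with hWe | hWe
    · -- W = {v}
      have hWsing : W = {v} := by
        rcases (Finset.erase_eq_empty_iff W v).mp hWe with h | h
        · exact absurd (h ▸ hv) (Finset.notMem_empty v)
        · exact h
      have heta : gvolIn G W W = 0 := by
        rw [hWsing]
        simp [gvolIn, gdegIn, Finset.filter_singleton, G.irrefl]
      rw [heta] at hWineq
      have hfac : (3:ℝ)/4 ≤ 1 - l * (LU - Real.logb 2 (sig W : ℝ)) := by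
        nlinarith [hlLU, mul_nonneg hlpos.le hlgW0]
      have hprod : (3:ℝ)/4 ≤ (sig W : ℝ) * (1 - l * (LU - Real.logb 2 (sig W : ℝ))) := by
        nlinarith [hfac, hsigWR]
      simp only [Nat.cast_zero] at hWineq
      linarith
    · -- erase is a smaller Q set
      have hsub : W.erase v ⊆ U := (Finset.erase_subset v W).trans hWU
      have hsig' : 1 ≤ sig (W.erase v) := hsig_lb _ hsub hWe
      have hsig'R : (1:ℝ) ≤ (sig (W.erase v) : ℝ) := by exact_mod_cast hsig'
      have hsR : (sig (W.erase v) : ℝ) + (w v : ℝ) = (sig W : ℝ) := by exact_mod_cast herase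
      have hetaer : (gvolIn G W W : ℝ)
          = (gvolIn G (W.erase v) (W.erase v) : ℝ) + 2 * (gdegIn G W v : ℝ) := by
        exact_mod_cast gvolIn_erase G hv
      have hxlgx : (sig (W.erase v) : ℝ) * Real.logb 2 (sig (W.erase v) : ℝ)
          ≤ (sig W : ℝ) * Real.logb 2 (sig W : ℝ) := by
        apply xlgx_mono hsig'R
        exact_mod_cast Finset.sum_le_sum_of_subset (Finset.erase_subset v W)
      have hkey : (sig (W.erase v) : ℝ) * (1 - l * (LU - Real.logb 2 (sig (W.erase v) : ℝ)))
          ≤ (gvolIn G (W.erase v) (W.erase v) : ℝ) := by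
        have hwvR : (1:ℝ) ≤ (w v : ℝ) := by exact_mod_cast hw1
        nlinarith [hWineq, hcon, hetaer]
      have hQ' : Q (W.erase v) := ⟨hWe, hsub, hkey⟩
      have := hWmin _ hQ'
      omega
  -- cut claim
  have hcut : ∀ A ⊆ W, A.Nonempty → (W \ A).Nonempty → 2 * sig A ≤ sig W →
      (l/2) * (sig A : ℝ) ≤ (gcutIn G W A : ℝ) := by
    intro A hAW hAne hBne hA2
    by_contra hcon
    push_neg at hcon
    set B := W \ A with hBdef
    have hBU : B ⊆ U := (Finset.sdiff_subset).trans hWU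
    have hAU : A ⊆ U := hAW.trans hWU
    have hsplitsig : sig B + sig A = sig W := Finset.sum_sdiff hAW
    have hsigA1 : 1 ≤ sig A := hsig_lb _ hAU hAne
    have hsigB1 : 1 ≤ sig B := hsig_lb _ hBU hBne
    have hAR : (1:ℝ) ≤ (sig A : ℝ) := by exact_mod_cast hsigA1
    have hBR : (1:ℝ) ≤ (sig B : ℝ) := by exact_mod_cast hsigB1
    have hsR : (sig B : ℝ) + (sig A : ℝ) = (sig W : ℝ) := by exact_mod_cast hsplitsig
    have hA2R : 2 * (sig A : ℝ) ≤ (sig W : ℝ) := by exact_mod_cast hA2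
    have hnQA : ¬ Q A := by
      intro hQA
      have := hWmin _ hQA
      omega
    have hetaA : (gvolIn G A A : ℝ) < (sig A : ℝ) * (1 - l * (LU - Real.logb 2 (sig A : ℝ))) := by
      by_contra hc
      push_neg at hc
      exact hnQA ⟨hAne, hAU, hc⟩
    have hsplit : (gvolIn G W W : ℝ) = (gvolIn G A A : ℝ) + (gvolIn G B B : ℝ)
        + 2 * (gcutIn G W A : ℝ) := by
      exact_mod_cast gvolIn_split G hAW
    -- log inequalities
    have hlgA : Real.logb 2 (sig A : ℝ) + 1 ≤ Real.logb 2 (sig W : ℝ) := by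
      have h2A : Real.logb 2 (2 * (sig A : ℝ)) = 1 + Real.logb 2 (sig A : ℝ) := by
        rw [Real.logb_mul (by norm_num) (by linarith)]
        rw [Real.logb_self_eq_one one_lt_two]
      have := (Real.logb_le_logb one_lt_two (by linarith) (by linarith)).mpr hA2R
      rw [h2A] at this
      linarith
    have hlgB : Real.logb 2 (sig B : ℝ) ≤ Real.logb 2 (sig W : ℝ) := by
      refine (Real.logb_le_logb one_lt_two (by linarith) (by linarith)).mpr ?_
      linarith
    have hlgA0 : 0 ≤ Real.logb 2 (sig A : ℝ) := Real.logb_nonneg one_lt_two hAR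
    have hlgB0 : 0 ≤ Real.logb 2 (sig B : ℝ) := Real.logb_nonneg one_lt_two hBR
    -- key potential computation
    have hkey : (sig B : ℝ) * (1 - l * (LU - Real.logb 2 (sig B : ℝ)))
        ≤ (gvolIn G B B : ℝ) := by
      have hterm : (sig A : ℝ) * (Real.logb 2 (sig W:ℝ) - Real.logb 2 (sig A:ℝ) - 1)
          + (sig B : ℝ) * (Real.logb 2 (sig W:ℝ) - Real.logb 2 (sig B:ℝ)) ≥ 0 := by
        have t1 : (0:ℝ) ≤ (sig A : ℝ) * (Real.logb 2 (sig W:ℝ) - Real.logb 2 (sig A:ℝ) - 1) := by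
          apply mul_nonneg (by linarith)
          linarith
        have t2 : (0:ℝ) ≤ (sig B : ℝ) * (Real.logb 2 (sig W:ℝ) - Real.logb 2 (sig B:ℝ)) := by
          apply mul_nonneg (by linarith)
          linarith
        linarith
      have e1 : 0 ≤ l * ((sig W:ℝ) * Real.logb 2 (sig W:ℝ)
          - (sig A:ℝ) * Real.logb 2 (sig A:ℝ) - (sig A:ℝ)
          - (sig B:ℝ) * Real.logb 2 (sig B:ℝ)) := by
        apply mul_nonneg hlpos.le
        nlinarith [hterm, hsR]
      have h1 : (sig W:ℝ) * (1 - l * (LU - Real.logb 2 (sig W:ℝ)))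
          ≤ (gvolIn G A A : ℝ) + (gvolIn G B B : ℝ) + 2 * (gcutIn G W A : ℝ) := by
        linarith [hWineq, hsplit]
      nlinarith [h1, hetaA, hcon, e1, hsR, hAR]
    have hQB : Q B := ⟨hBne, hBU, hkey⟩
    have := hWmin _ hQB
    omega
  -- assemble
  refine ⟨W, hWU, hWne, hdeg, ?_⟩
  intro S hSW hSne hWSne
  have hvolS : (gvolIn G W S : ℝ) ≤ (sig S : ℝ) := by
    have : gvolIn G W S ≤ sig S := Finset.sum_le_sum fun v _ => gdegIn_mono G hWU v
    exact_mod_cast this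
  have hvolWS : (gvolIn G W (W \ S) : ℝ) ≤ (sig (W \ S) : ℝ) := by
    have : gvolIn G W (W \ S) ≤ sig (W \ S) := Finset.sum_le_sum fun v _ => gdegIn_mono G hWU v
    exact_mod_cast this
  have hsplitsig : sig (W \ S) + sig S = sig W := Finset.sum_sdiff hSW
  have hconst : 1 / (8 * LU) = l / 2 := by
    rw [hldef]; ring
  rw [show (1:ℝ) / (8 * Real.logb 2 (gvolIn G U U : ℝ)) = l/2 by rw [← hsU, ← hLUdef, hldef]; ring]
  have hl2 : 0 ≤ l / 2 := by linarith
  rcases le_or_gt (sig S) (sig (W \ S)) with hc | hc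
  · have h2 : 2 * sig S ≤ sig W := by omega
    have := hcut S hSW hSne hWSne h2
    calc l/2 * min (gvolIn G W S : ℝ) (gvolIn G W (W \ S) : ℝ)
        ≤ l/2 * (gvolIn G W S : ℝ) := by
          apply mul_le_mul_of_nonneg_left (min_le_left _ _) hl2
      _ ≤ l/2 * (sig S : ℝ) := by apply mul_le_mul_of_nonneg_left hvolS hl2
      _ ≤ (gcutIn G W S : ℝ) := this
  · have hWSW : W \ S ⊆ W := Finset.sdiff_subset
    have hWSS : W \ (W \ S) = S := by
      rw [Finset.sdiff_sdiff_self_left]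
      exact Finset.inter_eq_right.mpr hSW
    have hSne' : (W \ (W \ S)).Nonempty := by rw [hWSS]; exact hSne
    have h2 : 2 * sig (W \ S) ≤ sig W := by omega
    have hcc := hcut (W \ S) hWSW hWSne hSne' h2
    have hsymm : gcutIn G W S = gcutIn G W (W \ S) := gcutIn_symm G hSW
    rw [hsymm]
    calc l/2 * min (gvolIn G W S : ℝ) (gvolIn G W (W \ S) : ℝ)
        ≤ l/2 * (gvolIn G W (W \ S) : ℝ) := by
          apply mul_le_mul_of_nonneg_left (min_le_right _ _) hl2
      _ ≤ l/2 * (sig (W \ S) : ℝ) := by apply mul_le_mul_of_nonneg_left hvolWS hl2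
      _ ≤ (gcutIn G W (W \ S) : ℝ) := hcc


-- ## Part D : relative cores via cascade

lemma cascade_bound (G : SimpleGraph V) (U : Finset V)
    (hU : ∀ T ⊆ U, T.Nonempty → ∃ v ∈ T, 3 * gdegIn G T v < gdeg G v) :
    3 * gvolIn G U U ≤ 2 * ∑ v ∈ U, gdeg G v := by
  classical
  induction U using Finset.strongInduction with
  | _ U ih =>
    rcases Finset.eq_empty_or_nonempty U with rfl | hne
    · simp [gvolIn]
    · obtain ⟨v, hv, hvdeg⟩ := hU U subset_rfl hne
      have hIH := ih (U.erase v) (Finset.erase_ssubset hv)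
        (fun T hT hTne => hU T (hT.trans (Finset.erase_subset v U)) hTne)
      have h1 : gvolIn G U U = gvolIn G (U.erase v) (U.erase v) + 2 * gdegIn G U v :=
        gvolIn_erase G hv
      have h2 : ∑ x ∈ U, gdeg G x = ∑ x ∈ U.erase v, gdeg G x + gdeg G v :=
        (Finset.sum_erase_add U _ hv).symm
      omega

lemma exists_relative_core (G : SimpleGraph V) (U : Finset V)
    (hbig : 2 * ∑ v ∈ U, gdeg G v < 3 * gvolIn G U U) :
    ∃ T ⊆ U, T.Nonempty ∧ ∀ v ∈ T, gdeg G v ≤ 3 * gdegIn G T v := by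
  by_contra hc
  push_neg at hc
  refine absurd (cascade_bound G U ?_) (by omega)
  intro T hT hTne
  obtain ⟨v, hv, hvd⟩ := hc T hT hTne
  exact ⟨v, hv, hvd⟩

-- ## Part E : low diameter of expanders

def ballIn (G : SimpleGraph V) (K : Finset V) (x : V) : ℕ → Finset V
  | 0 => {x}
  | r+1 => ballIn G K x r ∪ K.filter (fun y => ∃ z ∈ ballIn G K x r, G.Adj z y)

lemma ballIn_mono (G : SimpleGraph V) (K : Finset V) (x : V) (r : ℕ) :
    ballIn G K x r ⊆ ballIn G K x (r+1) := Finset.subset_union_left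

lemma ballIn_subset (G : SimpleGraph V) (K : Finset V) {x : V} (hx : x ∈ K) (r : ℕ) :
    ballIn G K x r ⊆ K := by
  induction r with
  | zero => simpa [ballIn] using hx
  | succ r ih =>
    rw [ballIn]
    exact Finset.union_subset ih (Finset.filter_subset _ _)

lemma ballIn_walk (G : SimpleGraph V) (K : Finset V) {x : V} (hx : x ∈ K) (r : ℕ) :
    ∀ y ∈ ballIn G K x r, ∃ p : G.Walk x y, (∀ a ∈ p.support, a ∈ K) ∧ p.length ≤ r := by
  induction r with
  | zero =>
    intro y hy
    rw [ballIn, Finset.mem_singleton] at hy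
    subst hy
    exact ⟨SimpleGraph.Walk.nil, by simp [hx], by simp⟩
  | succ r ih =>
    intro y hy
    rw [ballIn, Finset.mem_union] at hy
    rcases hy with hy | hy
    · obtain ⟨p, hp1, hp2⟩ := ih y hy
      exact ⟨p, hp1, hp2.trans (Nat.le_succ r)⟩
    · rw [Finset.mem_filter] at hy
      have hyK := hy.1
      obtain ⟨z, hz, hadj⟩ := hy.2
      obtain ⟨p, hp1, hp2⟩ := ih z hz
      refine ⟨p.concat hadj, ?_, ?_⟩
      · intro a ha
        rw [SimpleGraph.Walk.support_concat, List.mem_append] at ha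
        rcases ha with ha | ha
        · exact hp1 a ha
        · rw [List.mem_singleton] at ha
          exact ha ▸ hyK
      · rw [SimpleGraph.Walk.length_concat]
        omega

lemma gcutIn_eq_sum' (G : SimpleGraph V) (W S : Finset V) :
    gcutIn G W S = ∑ y ∈ W \ S, (S.filter (fun z => G.Adj y z)).card := by
  classical
  have hset : (Finset.univ.filter fun p : V × V =>
      p.1 ∈ S ∧ p.2 ∈ W ∧ p.2 ∉ S ∧ G.Adj p.1 p.2)
      = (W \ S).biUnion (fun y => (S.filter (fun z => G.Adj y z)).image (fun z => (z, y))) := by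
    ext ⟨a, b⟩
    simp only [Finset.mem_filter, Finset.mem_univ, true_and, Finset.mem_biUnion,
      Finset.mem_image, Finset.mem_sdiff, Prod.mk.injEq]
    constructor
    · rintro ⟨ha, hbW, hbS, hadj⟩
      exact ⟨b, ⟨hbW, hbS⟩, a, ⟨ha, hadj.symm⟩, rfl, rfl⟩
    · rintro ⟨y, ⟨hyW, hyS⟩, z, ⟨hz, hadj⟩, rfl, rfl⟩
      exact ⟨hz, hyW, hyS, hadj.symm⟩
  rw [gcutIn, hset, Finset.card_biUnion]
  · exact Finset.sum_congr rfl fun y _ =>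
      Finset.card_image_of_injective _ (fun a b hab => by injection hab)
  · intro a _ b _ hab
    simp only [Finset.disjoint_left, Finset.mem_image]
    rintro p ⟨y, _, rfl⟩ ⟨z, _, hz⟩
    exact hab (by injection hz with _ h2; exact h2.symm)

lemma ballIn_growth (G : SimpleGraph V) (K : Finset V) {x : V} (hx : x ∈ K) (r : ℕ) :
    gcutIn G K (ballIn G K x r) + gvolIn G K (ballIn G K x r)
      ≤ gvolIn G K (ballIn G K x (r+1)) := by
  classical
  set B := ballIn G K x r with hB
  set B' := ballIn G K x (r+1) with hB'
  have hBB' : B ⊆ B' := ballIn_mono G K x r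
  have hsum : gvolIn G K B' = gvolIn G K (B' \ B) + gvolIn G K B :=
    (Finset.sum_sdiff hBB').symm
  have hcut : gcutIn G K B ≤ gvolIn G K (B' \ B) := by
    rw [gcutIn_eq_sum']
    have e1 : ∑ y ∈ K \ B, (B.filter (fun z => G.Adj y z)).card
        = ∑ y ∈ (K \ B).filter (fun y => (B.filter (fun z => G.Adj y z)).card ≠ 0),
            (B.filter (fun z => G.Adj y z)).card :=
      (Finset.sum_filter_ne_zero _).symm
    rw [e1]
    have hsub : (K \ B).filter (fun y => (B.filter (fun z => G.Adj y z)).card ≠ 0) ⊆ B' \ B := by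
      intro y hy
      rw [Finset.mem_filter, Finset.mem_sdiff] at hy
      obtain ⟨⟨hyK, hyB⟩, hcard⟩ := hy
      obtain ⟨z, hz⟩ := Finset.card_pos.mp (Nat.pos_of_ne_zero hcard)
      rw [Finset.mem_filter] at hz
      rw [Finset.mem_sdiff]
      refine ⟨?_, hyB⟩
      rw [hB', ballIn, Finset.mem_union]
      right
      rw [Finset.mem_filter]
      exact ⟨hyK, z, hz.1, hz.2.symm⟩
    calc ∑ y ∈ (K \ B).filter (fun y => (B.filter (fun z => G.Adj y z)).card ≠ 0),
            (B.filter (fun z => G.Adj y z)).card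
        ≤ ∑ y ∈ B' \ B, (B.filter (fun z => G.Adj y z)).card :=
          Finset.sum_le_sum_of_subset_of_nonneg hsub (fun _ _ _ => Nat.zero_le _)
      _ ≤ ∑ y ∈ B' \ B, gdegIn G K y := Finset.sum_le_sum fun y _ =>
          Finset.card_le_card (Finset.filter_subset_filter _ (ballIn_subset G K hx r))
  omega

lemma ballIn_self (G : SimpleGraph V) (K : Finset V) (x : V) (r : ℕ) :
    x ∈ ballIn G K x r := by
  induction r with
  | zero => simp [ballIn]
  | succ r ih => rw [ballIn, Finset.mem_union]; exact Or.inl ih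

lemma gvolIn_le_of_subset (G : SimpleGraph V) {K S : Finset V} (h : S ⊆ K) :
    gvolIn G K S ≤ gvolIn G K K :=
  Finset.sum_le_sum_of_subset h

lemma ballIn_vol_lb (G : SimpleGraph V) (K : Finset V) (φ : ℝ) (hφ0 : 0 < φ)
    (hexp : IsInducedExpander G K φ) (hdeg : ∀ v ∈ K, 1 ≤ gdegIn G K v)
    {x : V} (hx : x ∈ K) (r : ℕ) :
    (1+φ)^r ≤ (gvolIn G K (ballIn G K x r) : ℝ) ∨
      (gvolIn G K K : ℝ) < 2 * (gvolIn G K (ballIn G K x r) : ℝ) := by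
  have hvol1 : ∀ s : ℕ, (1:ℝ) ≤ (gvolIn G K (ballIn G K x s) : ℝ) := by
    intro s
    have h1 : 1 ≤ gdegIn G K x := hdeg x hx
    have h2 : gdegIn G K x ≤ gvolIn G K (ballIn G K x s) :=
      Finset.single_le_sum (fun v _ => Nat.zero_le _) (ballIn_self G K x s)
    exact_mod_cast h1.trans h2
  induction r with
  | zero =>
    left
    rw [pow_zero]
    exact hvol1 0
  | succ r ih =>
    set B := ballIn G K x r with hBdef
    have hmono : (gvolIn G K B : ℝ) ≤ (gvolIn G K (ballIn G K x (r+1)) : ℝ) := by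
      exact_mod_cast Finset.sum_le_sum_of_subset (ballIn_mono G K x r)
    rcases le_or_gt (2 * (gvolIn G K B : ℝ)) ((gvolIn G K K : ℝ)) with hle | hlt
    · -- growth case
      have hBK : B ⊆ K := ballIn_subset G K hx r
      have hKBne : (K \ B).Nonempty := by
        rcases Finset.eq_empty_or_nonempty (K \ B) with he | hne
        · exfalso
          have : K ⊆ B := fun a ha => by
            by_contra hc
            exact Finset.notMem_empty a (he ▸ Finset.mem_sdiff.mpr ⟨ha, hc⟩)
          have heq : gvolIn G K B = gvolIn G K K := le_antisymm
            (gvolIn_le_of_subset G hBK) (Finset.sum_le_sum_of_subset this)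
          rw [heq] at hle
          have := hvol1 r
          rw [hBdef] at *
          nlinarith [hvol1 r, heq ▸ hle]
        · exact hne
      have hsdiff : gvolIn G K (K \ B) + gvolIn G K B = gvolIn G K K :=
        Finset.sum_sdiff hBK
      have hmin : min (gvolIn G K B : ℝ) (gvolIn G K (K \ B) : ℝ) = (gvolIn G K B : ℝ) := by
        apply min_eq_left
        have : (gvolIn G K (K \ B) : ℝ) + (gvolIn G K B : ℝ) = (gvolIn G K K : ℝ) := by
          exact_mod_cast hsdiff
        linarith
      have hcut := hexp B hBK ⟨x, ballIn_self G K x r⟩ hKBne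
      rw [hmin] at hcut
      have hgrow : (gcutIn G K B : ℝ) + (gvolIn G K B : ℝ)
          ≤ (gvolIn G K (ballIn G K x (r+1)) : ℝ) := by
        exact_mod_cast ballIn_growth G K hx r
      have hstep : (1+φ) * (gvolIn G K B : ℝ) ≤ (gvolIn G K (ballIn G K x (r+1)) : ℝ) := by
        nlinarith [hcut, hgrow]
      rcases ih with h | h
      · left
        calc (1+φ)^(r+1) = (1+φ) * (1+φ)^r := by ring
          _ ≤ (1+φ) * (gvolIn G K B : ℝ) := by nlinarith [hvol1 r]
          _ ≤ _ := hstep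
      · exact absurd hle (not_le.mpr h)
    · right
      linarith

lemma expander_diam (G : SimpleGraph V) (K : Finset V) (φ : ℝ) (hφ0 : 0 < φ)
    (hexp : IsInducedExpander G K φ) (hdeg : ∀ v ∈ K, 1 ≤ gdegIn G K v)
    (M : ℕ) (hM : (gvolIn G K K : ℝ) < (1+φ)^M) :
    ∀ x ∈ K, ∀ y ∈ K, ∃ p : G.Walk x y, p.IsPath ∧ (∀ a ∈ p.support, a ∈ K)
      ∧ p.length ≤ 2*M := by
  intro x hx y hy
  classical
  have hhalf : ∀ z ∈ K, (gvolIn G K K : ℝ) < 2 * (gvolIn G K (ballIn G K z M) : ℝ) := by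
    intro z hz
    rcases ballIn_vol_lb G K φ hφ0 hexp hdeg hz M with h | h
    · exfalso
      have h2 : (gvolIn G K (ballIn G K z M) : ℝ) ≤ (gvolIn G K K : ℝ) := by
        exact_mod_cast gvolIn_le_of_subset G (ballIn_subset G K hz M)
      linarith
    · exact h
  have hxy : ((ballIn G K x M) ∩ (ballIn G K y M)).Nonempty := by
    by_contra hc
    rw [Finset.not_nonempty_iff_eq_empty] at hc
    have hdisj : Disjoint (ballIn G K x M) (ballIn G K y M) :=
      Finset.disjoint_iff_inter_eq_empty.mpr hc
    have hunion : gvolIn G K (ballIn G K x M) + gvolIn G K (ballIn G K y M)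
        = gvolIn G K ((ballIn G K x M) ∪ (ballIn G K y M)) :=
      (Finset.sum_union hdisj).symm
    have hsub : gvolIn G K ((ballIn G K x M) ∪ (ballIn G K y M)) ≤ gvolIn G K K :=
      gvolIn_le_of_subset G (Finset.union_subset (ballIn_subset G K hx M)
        (ballIn_subset G K hy M))
    have h1 := hhalf x hx
    have h2 := hhalf y hy
    have h3 : (gvolIn G K (ballIn G K x M) : ℝ) + (gvolIn G K (ballIn G K y M) : ℝ)
        ≤ (gvolIn G K K : ℝ) := by
      exact_mod_cast hunion ▸ hsub
    linarith
  obtain ⟨z, hz⟩ := hxy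
  rw [Finset.mem_inter] at hz
  obtain ⟨p, hp1, hp2⟩ := ballIn_walk G K hx M z hz.1
  obtain ⟨q, hq1, hq2⟩ := ballIn_walk G K hy M z hz.2
  set w := p.append q.reverse with hw
  have hwsupp : ∀ a ∈ w.support, a ∈ K := by
    intro a ha
    rw [hw, SimpleGraph.Walk.support_append] at ha
    rcases List.mem_append.mp ha with ha | ha
    · exact hp1 a ha
    · have : a ∈ q.reverse.support := List.mem_of_mem_tail ha
      rw [SimpleGraph.Walk.support_reverse] at this
      exact hq1 a (List.mem_reverse.mp this)
  have hwlen : w.length ≤ 2*M := by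
    rw [hw, SimpleGraph.Walk.length_append, SimpleGraph.Walk.length_reverse]
    omega
  refine ⟨w.bypass, SimpleGraph.Walk.bypass_isPath w, ?_, ?_⟩
  · intro a ha
    exact hwsupp a (SimpleGraph.Walk.support_bypass_subset w ha)
  · exact (SimpleGraph.Walk.length_bypass_le w).trans hwlen

lemma exists_pow_gt (φ X : ℝ) (hφ0 : 0 < φ) (hX : 1 ≤ X) :
    ∃ M : ℕ, (M:ℝ) ≤ (2/φ + 1) * (Real.logb 2 X + 2) ∧ X < (1+φ)^M := by
  set a : ℕ := ⌈2/φ⌉₊ with ha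
  set b : ℕ := ⌈Real.logb 2 X⌉₊ + 1 with hb
  have hlgX0 : 0 ≤ Real.logb 2 X := Real.logb_nonneg one_lt_two hX
  have haR : (2:ℝ)/φ ≤ (a:ℝ) := Nat.le_ceil _
  have haR' : (a:ℝ) ≤ 2/φ + 1 := by
    rw [ha]
    exact (Nat.ceil_lt_add_one (by positivity)).le
  have hbR : Real.logb 2 X < (b:ℝ) := by
    rw [hb]
    push_cast
    exact lt_of_le_of_lt (Nat.le_ceil _) (by linarith)
  have hbR' : (b:ℝ) ≤ Real.logb 2 X + 2 := by
    rw [hb]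
    push_cast
    have := Nat.ceil_lt_add_one hlgX0
    linarith
  refine ⟨a*b, ?_, ?_⟩
  · rw [Nat.cast_mul]
    exact mul_le_mul haR' hbR' (by positivity) (by positivity)
  · have h2 : (2:ℝ) ≤ (1+φ)^a := by
      have hber : 1 + (a:ℝ) * φ ≤ (1+φ)^a := by
        have := one_add_mul_le_pow (a := φ) (by linarith) a
        linarith [this]
      have : (2:ℝ) ≤ 1 + (a:ℝ)*φ := by
        have : (2:ℝ)/φ * φ ≤ (a:ℝ) * φ := by
          apply mul_le_mul_of_nonneg_right haR (le_of_lt hφ0)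
        rw [div_mul_cancel₀] at this
        · linarith
        · exact ne_of_gt hφ0
      linarith
    have h3 : X < (2:ℝ)^(b:ℝ) := by
      calc X = (2:ℝ)^(Real.logb 2 X) := (Real.rpow_logb (by norm_num) (by norm_num) (by linarith)).symm
        _ < (2:ℝ)^(b:ℝ) := by
          apply Real.rpow_lt_rpow_left_iff (by norm_num) |>.mpr hbR
    have h4 : (2:ℝ)^(b:ℝ) = (2:ℝ)^b := by
      rw [Real.rpow_natCast]
    have h5 : (2:ℝ)^b ≤ ((1+φ)^a)^b := by
      apply pow_le_pow_left₀ (by norm_num) h2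
    calc X < (2:ℝ)^(b:ℝ) := h3
      _ = (2:ℝ)^b := h4
      _ ≤ ((1+φ)^a)^b := h5
      _ = (1+φ)^(a*b) := (pow_mul _ a b).symm

-- ## Part F : walk utilities

lemma walk_cross (G : SimpleGraph V) (K : Finset V) :
    ∀ {u z : V} (p : G.Walk u z), u ∈ K → z ∉ K →
    ∃ x ∈ K, ∃ y, y ∉ K ∧ G.Adj x y ∧ y ∈ p.support := by
  intro u z p
  induction p with
  | nil => intro hu hz; exact absurd hu hz
  | @cons a b c hadj q ih =>
    intro hu hz
    by_cases hb : b ∈ K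
    · obtain ⟨x, hx, y, hy1, hy2, hy3⟩ := ih hb hz
      exact ⟨x, hx, y, hy1, hy2, by rw [SimpleGraph.Walk.support_cons]; exact List.mem_cons_of_mem _ hy3⟩
    · exact ⟨a, hu, b, hb, hadj, by rw [SimpleGraph.Walk.support_cons]; exact List.mem_cons_of_mem _ q.start_mem_support⟩

lemma mem_support_of_mem_edges (G : SimpleGraph V) {u z a : V} (p : G.Walk u z)
    {e : Sym2 V} (he : e ∈ p.edges) (ha : a ∈ e) : a ∈ p.support := by
  induction e with
  | _ x y =>
    rw [Sym2.mem_iff] at ha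
    rcases ha with rfl | rfl
    · exact SimpleGraph.Walk.fst_mem_support_of_mem_edges p he
    · exact SimpleGraph.Walk.snd_mem_support_of_mem_edges p he

lemma path_unique_start_edge (G : SimpleGraph V) {u z : V} (p : G.Walk u z) (hp : p.IsPath) :
    ∀ e₁ ∈ p.edges, ∀ e₂ ∈ p.edges, u ∈ e₁ → u ∈ e₂ → e₁ = e₂ := by
  induction p with
  | nil => intro e₁ he₁; simp [SimpleGraph.Walk.edges] at he₁
  | @cons a b c hadj q ih =>
    intro e₁ he₁ e₂ he₂ hu₁ hu₂
    rw [SimpleGraph.Walk.edges_cons, List.mem_cons] at he₁ he₂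
    have hnots : a ∉ q.support := by
      have := hp.support_nodup
      rw [SimpleGraph.Walk.support_cons] at this
      exact (List.nodup_cons.mp this).1
    have hkey : ∀ e ∈ q.edges, a ∉ e := fun e he hae =>
      hnots (mem_support_of_mem_edges G q he hae)
    rcases he₁ with rfl | he₁
    · rcases he₂ with rfl | he₂
      · rfl
      · exact absurd hu₂ (hkey _ he₂)
    · exact absurd hu₁ (hkey _ he₁)

-- at most one edge of a path from u contains u
lemma path_edges_at_start_card (G : SimpleGraph V) {u z : V} (p : G.Walk u z) (hp : p.IsPath) :
    (p.edges.toFinset.filter (fun e => u ∈ e)).card ≤ 1 := by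
  apply Finset.card_le_one.mpr
  intro e₁ he₁ e₂ he₂
  rw [Finset.mem_filter, List.mem_toFinset] at he₁ he₂
  exact path_unique_start_edge G p hp e₁ he₁.1 e₂ he₂.1 he₁.2 he₂.2

-- ## Part G : easy-regime piece growing

lemma grow_piece (G : SimpleGraph V) (T : Finset V) (u : V) (hu : u ∈ T) (s : ℕ) (hs : 1 ≤ s)
    (hbig : s ≤ (T.filter (fun y => ∃ p : G.Walk u y, ∀ a ∈ p.support, a ∈ T)).card) :
    ∃ K ⊆ T, ∃ x₀ ∈ K, K.card = s ∧ (2 ≤ s → ∀ v ∈ K, ∃ z ∈ K, G.Adj v z) ∧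
      (∀ y ∈ K, ∃ p : G.Walk x₀ y, (∀ a ∈ p.support, a ∈ K) ∧ p.length ≤ s) := by
  classical
  set Cu := T.filter (fun y => ∃ p : G.Walk u y, ∀ a ∈ p.support, a ∈ T) with hCu
  have huC : u ∈ Cu := by
    rw [hCu, Finset.mem_filter]
    exact ⟨hu, SimpleGraph.Walk.nil, by simp [hu]⟩
  -- build by induction on m
  suffices h : ∀ m : ℕ, 1 ≤ m → m ≤ s → ∃ K ⊆ Cu, u ∈ K ∧ K.card = m ∧
      (2 ≤ m → ∀ v ∈ K, ∃ z ∈ K, G.Adj v z) ∧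
      (∀ y ∈ K, ∃ p : G.Walk u y, (∀ a ∈ p.support, a ∈ K) ∧ p.length ≤ m) by
    obtain ⟨K, hKC, huK, hcard, hdeg, hpaths⟩ := h s hs le_rfl
    exact ⟨K, hKC.trans (Finset.filter_subset _ _), u, huK, hcard, hdeg, hpaths⟩
  intro m
  induction m with
  | zero => omega
  | succ m ih =>
    intro _ hms
    rcases Nat.eq_or_lt_of_le (Nat.one_le_iff_ne_zero.mpr (Nat.succ_ne_zero m)) with h1 | h1
    · -- m+1 = 1
      refine ⟨{u}, Finset.singleton_subset_iff.mpr huC, Finset.mem_singleton_self u,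
        by rw [Finset.card_singleton]; omega, fun h2 => absurd h2 (by omega), ?_⟩
      intro y hy
      rw [Finset.mem_singleton] at hy
      subst hy
      exact ⟨SimpleGraph.Walk.nil, by simp, by simp⟩
    · -- m ≥ 1
      obtain ⟨K, hKC, huK, hcard, hdeg, hpaths⟩ := ih (by omega) (by omega)
      -- find y ∈ Cu \ K adjacent to K
      have hKlt : K.card < Cu.card := by
        rw [hcard]
        exact lt_of_lt_of_le (by omega) hbig
      obtain ⟨z, hz⟩ : (Cu \ K).Nonempty := by
        rw [Finset.sdiff_nonempty]
        intro hsub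
        exact absurd (Finset.card_le_card hsub) (not_le.mpr hKlt)
      rw [Finset.mem_sdiff] at hz
      obtain ⟨hzC, hzK⟩ := hz
      rw [hCu, Finset.mem_filter] at hzC
      obtain ⟨hzT, pw, hpw⟩ := hzC
      obtain ⟨x, hxK, y, hyK, hadj, hysupp⟩ := walk_cross G K pw huK hzK
      have hyT : y ∈ T := hpw y hysupp
      have hyC : y ∈ Cu := by
        rw [hCu, Finset.mem_filter]
        refine ⟨hyT, ?_⟩
        -- path from u to x within K, then edge to y
        obtain ⟨q, hq1, _⟩ := hpaths x hxK
        exact ⟨q.concat hadj, by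
          intro a ha
          rw [SimpleGraph.Walk.support_concat, List.mem_append] at ha
          rcases ha with ha | ha
          · exact (Finset.filter_subset _ _) (hKC (hq1 a ha))
          · rw [List.mem_singleton] at ha
            exact ha ▸ hyT⟩
      refine ⟨insert y K, Finset.insert_subset hyC hKC, Finset.mem_insert_of_mem huK, ?_, ?_, ?_⟩
      · rw [Finset.card_insert_of_notMem hyK, hcard]
      · intro _ v hv
        rw [Finset.mem_insert] at hv
        rcases hv with rfl | hv
        · exact ⟨x, Finset.mem_insert_of_mem hxK, hadj.symm⟩
        · rcases Nat.lt_or_ge m 2 with hm2 | hm2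
          · -- m = 1 : K = {u}, v = u, neighbor y? need u adj to something in insert y K
            have hK1 : K = {u} := by
              apply Finset.eq_singleton_iff_unique_mem.mpr
              refine ⟨huK, fun w hw => ?_⟩
              by_contra hne
              have : 2 ≤ K.card := Finset.one_lt_card.mpr ⟨w, hw, u, huK, hne⟩
              omega
            have hvu : v = u := by
              rw [hK1, Finset.mem_singleton] at hv; exact hv
            have hxu : x = u := by
              rw [hK1, Finset.mem_singleton] at hxK; exact hxK
            exact ⟨y, Finset.mem_insert_self y _, hvu ▸ (hxu ▸ hadj)⟩
          · obtain ⟨z', hz', hadj'⟩ := hdeg hm2 v hv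
            exact ⟨z', Finset.mem_insert_of_mem hz', hadj'⟩
      · intro w hw
        rw [Finset.mem_insert] at hw
        rcases hw with rfl | hw
        · obtain ⟨q, hq1, hq2⟩ := hpaths x hxK
          refine ⟨q.concat hadj, ?_, ?_⟩
          · intro a ha
            rw [SimpleGraph.Walk.support_concat, List.mem_append] at ha
            rcases ha with ha | ha
            · exact Finset.mem_insert_of_mem (hq1 a ha)
            · rw [List.mem_singleton] at ha
              rw [ha]
              exact Finset.mem_insert_self w _
          · rw [SimpleGraph.Walk.length_concat]; omega
        · obtain ⟨q, hq1, hq2⟩ := hpaths w hw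
          exact ⟨q, fun a ha => Finset.mem_insert_of_mem (hq1 a ha), by omega⟩

-- ## Part H : hard-regime support lemmas

lemma sum_dmg (F_E : Finset (Sym2 V)) (hnd : ∀ e ∈ F_E, ¬ e.IsDiag) :
    ∑ v : V, (F_E.filter (fun e => v ∈ e)).card = 2 * F_E.card := by
  classical
  have h1 : ∀ v : V, (F_E.filter (fun e => v ∈ e)).card
      = ∑ e ∈ F_E, if v ∈ e then 1 else 0 := fun v => Finset.card_filter _ _
  rw [Finset.sum_congr rfl (fun v _ => h1 v), Finset.sum_comm]
  have h2 : ∀ e ∈ F_E, (∑ v : V, if v ∈ e then 1 else 0) = 2 := by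
    intro e he
    rw [← Finset.card_filter]
    induction e with
    | _ a b =>
      have hab : a ≠ b := fun hc => hnd _ he (by rw [hc]; exact Sym2.mk_isDiag_iff.mpr rfl)
      have : Finset.univ.filter (fun v => v ∈ (s(a,b) : Sym2 V)) = {a, b} := by
        ext v
        simp [Sym2.mem_iff]
      rw [this, Finset.card_insert_of_notMem (by simpa using hab), Finset.card_singleton]
  rw [Finset.sum_congr rfl h2, Finset.sum_const, smul_eq_mul, mul_comm]

lemma deg_le_degIn_add_dmg (H : SimpleGraph V) (F_E : Finset (Sym2 V)) (U : Finset V) (v : V)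
    (hnb : ∀ y, (H.deleteEdges ↑F_E).Adj v y → y ∈ U) :
    gdeg H v ≤ gdegIn H U v + (F_E.filter (fun e => v ∈ e)).card := by
  classical
  have hsub : Finset.univ.filter (fun y => H.Adj v y)
      ⊆ (U.filter (fun y => H.Adj v y)) ∪ (Finset.univ.filter (fun y => H.Adj v y ∧ s(v,y) ∈ F_E)) := by
    intro y hy
    rw [Finset.mem_filter] at hy
    rw [Finset.mem_union, Finset.mem_filter, Finset.mem_filter]
    by_cases he : s(v,y) ∈ F_E
    · exact Or.inr ⟨Finset.mem_univ y, hy.2, he⟩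
    · left
      refine ⟨hnb y ?_, hy.2⟩
      rw [SimpleGraph.deleteEdges_adj]
      exact ⟨hy.2, he⟩
  have h2 : (Finset.univ.filter (fun y => H.Adj v y ∧ s(v,y) ∈ F_E)).card
      ≤ (F_E.filter (fun e => v ∈ e)).card := by
    apply Finset.card_le_card_of_injOn (fun y => s(v,y))
    · intro y hy
      rw [Finset.mem_coe, Finset.mem_filter] at hy
      rw [Finset.mem_coe, Finset.mem_filter]
      exact ⟨hy.2.2, Sym2.mem_mk_left v y⟩
    · intro y₁ _ y₂ _ heq
      exact Sym2.congr_right.mp heq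
  calc gdeg H v ≤ ((U.filter (fun y => H.Adj v y))
        ∪ (Finset.univ.filter (fun y => H.Adj v y ∧ s(v,y) ∈ F_E))).card :=
        Finset.card_le_card hsub
    _ ≤ _ := by
        refine (Finset.card_union_le _ _).trans ?_
        have h3 : (U.filter (fun y => H.Adj v y)).card = gdegIn H U v := rfl
        omega

lemma gvolIn_le_sq (G : SimpleGraph V) (T : Finset V) :
    gvolIn G T T ≤ Fintype.card V * Fintype.card V := by
  calc gvolIn G T T ≤ ∑ _v ∈ T, Fintype.card V :=
        Finset.sum_le_sum fun v _ => (gdegIn_le_card G T v).trans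
          (Finset.card_le_card (Finset.subset_univ T))
    _ = T.card * Fintype.card V := by rw [Finset.sum_const, smul_eq_mul]
    _ ≤ Fintype.card V * Fintype.card V :=
        Nat.mul_le_mul_right _ (Finset.card_le_card (Finset.subset_univ T))

-- ## Part I : the new-core construction in the hard regime

lemma hard_new_core (H : SimpleGraph V) (h : ℕ) (X : Finset V) (u : V)
    (hmin : ∀ v : V, h ≤ gdeg H v)
    (L : ℝ) (hL1 : 1 ≤ L)
    (hn2L : ∀ m : ℕ, 1 ≤ m → m ≤ Fintype.card V * Fintype.card V →
      Real.logb 2 (m:ℝ) ≤ 2 * L)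
    (hhard : 300000 * L < (h:ℝ))
    (ℓ k : ℕ) (hkh : (k:ℝ) ≤ 2*(h:ℝ)/3 + 1) (hℓL : (ℓ:ℝ) ≤ 18*L) (hℓ5 : 5 ≤ ℓ)
    (hpow : ((Fintype.card V : ℝ))^2 < (4/3:ℝ)^(ℓ - 3))
    (F_E : Finset (Sym2 V)) (hFEedges : ∀ e ∈ F_E, e ∈ H.edgeSet)
    (hFEcard : F_E.card ≤ k * ℓ)
    (hFEu : (F_E.filter (fun e => u ∈ e)).card ≤ k)
    (hblocked : ∀ y ∈ X, ∀ p : (H.deleteEdges ↑F_E).Walk u y, ℓ < p.length) :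
    ∃ W : Finset V, W ∩ X = ∅ ∧ W.Nonempty ∧
      (∀ v ∈ W, (h:ℝ) ≤ 12 * (gdegIn H W v : ℝ)) ∧
      IsInducedExpander H W ((1/100000)/L) ∧
      (∀ x ∈ W, ∀ y ∈ W, ∃ p : H.Walk x y, p.IsPath ∧ (∀ a ∈ p.support, a ∈ W) ∧
        (p.length:ℝ) ≤ 3000 * L / ((1/100000)/L)) := by
  classical
  set H' := H.deleteEdges ↑F_E with hH'
  set dmg : V → ℕ := fun v => (F_E.filter (fun e => v ∈ e)).card with hdmgdef
  set vg : Finset V → ℕ := fun T => ∑ v ∈ T, gdeg H v with hvgdef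
  set B : ℕ → Finset V := fun r => ballIn H' Finset.univ u r with hBdef
  have hLpos : (0:ℝ) < L := by linarith
  have hhR : (300000:ℝ) < (h:ℝ) := by nlinarith
  have hh3 : 3 ≤ h := by exact_mod_cast (by linarith : (3:ℝ) ≤ (h:ℝ))
  have hkh' : k ≤ h := by
    have : (k:ℝ) ≤ (h:ℝ) := by linarith [hkh, hhR]
    exact_mod_cast this
  -- basic step property of balls
  have hstep : ∀ r, ∀ v ∈ B r, ∀ y, H'.Adj v y → y ∈ B (r+1) := by
    intro r v hv y hy
    rw [hBdef]
    show y ∈ ballIn H' Finset.univ u (r+1)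
    rw [ballIn, Finset.mem_union]
    right
    convert (Finset.mem_filter.mpr ⟨Finset.mem_univ y, v, hv, hy⟩ :
      y ∈ Finset.univ.filter (fun a => ∃ z ∈ ballIn H' Finset.univ u r, H'.Adj z a))
  have hdegin : ∀ r, ∀ v ∈ B r, gdeg H v ≤ gdegIn H (B (r+1)) v + dmg v :=
    fun r v hv => deg_le_degIn_add_dmg H F_E _ v (fun y hy => hstep r v hv y hy)
  have hnd : ∀ e ∈ F_E, ¬ e.IsDiag := fun e he =>
    H.not_isDiag_of_mem_edgeSet (hFEedges e he)
  have hdmgsum : ∑ v : V, dmg v = 2 * F_E.card := sum_dmg F_E hnd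
  have hdmgsum_le : ∀ T : Finset V, ∑ v ∈ T, dmg v ≤ 2 * F_E.card := by
    intro T
    rw [← hdmgsum]
    exact Finset.sum_le_sum_of_subset (Finset.subset_univ T)
  -- B 1 is large
  have hduk : h ≤ (Finset.univ.filter (fun y => H'.Adj u y)).card + k := by
    have h1 := deg_le_degIn_add_dmg H F_E (Finset.univ.filter (fun y => H'.Adj u y)) u
      (fun y hy => Finset.mem_filter.mpr ⟨Finset.mem_univ y, hy⟩)
    have h2 : gdegIn H (Finset.univ.filter (fun y => H'.Adj u y)) u
        ≤ (Finset.univ.filter (fun y => H'.Adj u y)).card := gdegIn_le_card H _ u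
    have h3 := hmin u
    have h4 : dmg u ≤ k := hFEu
    omega
  have hB1card : (Finset.univ.filter (fun y => H'.Adj u y)).card + 1 ≤ (B 1).card := by
    have hsub : insert u (Finset.univ.filter (fun y => H'.Adj u y)) ⊆ B 1 := by
      intro y hy
      rw [Finset.mem_insert] at hy
      rcases hy with rfl | hy
      · exact ballIn_self H' Finset.univ y 1
      · rw [Finset.mem_filter] at hy
        exact hstep 0 u (ballIn_self H' Finset.univ u 0) y hy.2
    have hnmem : u ∉ Finset.univ.filter (fun y => H'.Adj u y) := by
      rw [Finset.mem_filter]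
      exact fun hc => H'.irrefl hc.2
    calc (Finset.univ.filter (fun y => H'.Adj u y)).card + 1
        = (insert u (Finset.univ.filter (fun y => H'.Adj u y))).card :=
          (Finset.card_insert_of_notMem hnmem).symm
      _ ≤ (B 1).card := Finset.card_le_card hsub
  have hvgB1 : (h - k + 1) * h ≤ vg (B 1) := by
    have h1 : (h - k + 1) ≤ (B 1).card := by omega
    calc (h - k + 1) * h ≤ (B 1).card * h := Nat.mul_le_mul_right h h1
      _ = ∑ _v ∈ B 1, h := by rw [Finset.sum_const, smul_eq_mul]
      _ ≤ vg (B 1) := Finset.sum_le_sum fun v _ => hmin v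
  have hvgmono : ∀ T T' : Finset V, T ⊆ T' → vg T ≤ vg T' := by
    intro T T' hTT'
    exact Finset.sum_le_sum_of_subset hTT'
  have hvg_ub : ∀ T : Finset V, vg T ≤ Fintype.card V * Fintype.card V := by
    intro T
    calc vg T ≤ ∑ _v ∈ T, Fintype.card V := Finset.sum_le_sum fun v _ =>
          Finset.card_le_card (Finset.filter_subset _ _)
      _ = T.card * Fintype.card V := by rw [Finset.sum_const, smul_eq_mul]
      _ ≤ _ := Nat.mul_le_mul_right _ (Finset.card_le_card (Finset.subset_univ T))
  -- radius choice
  obtain ⟨r, hr1, hrℓ, hrvol⟩ : ∃ r, 1 ≤ r ∧ r + 1 ≤ ℓ - 1 ∧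
      3 * vg (B (r+1)) ≤ 4 * vg (B r) := by
    by_contra hc
    push_neg at hc
    have hgrow : ∀ j : ℕ, j ≤ ℓ - 3 → (vg (B 1) : ℝ) * (4/3)^j ≤ (vg (B (1+j)) : ℝ) := by
      intro j
      induction j with
      | zero => intro _; simp
      | succ j ih =>
        intro hj
        have hih := ih (by omega)
        have hcj := hc (1+j) (by omega) (by omega)
        have hcjR : (4:ℝ) * (vg (B (1+j)) : ℝ) < 3 * (vg (B (1+j+1)) : ℝ) := by
          exact_mod_cast hcj
        have : (vg (B 1) : ℝ) * (4/3)^(j+1) = ((vg (B 1) : ℝ) * (4/3)^j) * (4/3) := by ring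
        rw [this]
        have h43 : (0:ℝ) < 4/3 := by norm_num
        calc ((vg (B 1) : ℝ) * (4/3)^j) * (4/3) ≤ (vg (B (1+j)) : ℝ) * (4/3) := by
              apply mul_le_mul_of_nonneg_right hih (by norm_num)
          _ ≤ (vg (B (1+(j+1))) : ℝ) := by
              have : (1:ℕ)+(j+1) = 1+j+1 := by omega
              rw [this]
              linarith
    have hbig := hgrow (ℓ - 3) le_rfl
    have hub : (vg (B (1 + (ℓ-3))) : ℝ) ≤ ((Fintype.card V : ℝ))^2 := by
      have := hvg_ub (B (1 + (ℓ-3)))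
      have h2 : ((Fintype.card V * Fintype.card V : ℕ) : ℝ) = ((Fintype.card V : ℝ))^2 := by
        push_cast; ring
      rw [← h2]
      exact_mod_cast this
    have hvgB1pos : (1:ℝ) ≤ (vg (B 1) : ℝ) := by
      have h1 : 1 ≤ (h - k + 1) * h :=
        Nat.one_le_iff_ne_zero.mpr (Nat.mul_ne_zero (by omega) (by omega))
      have := hvgB1
      have : (1:ℕ) ≤ vg (B 1) := le_trans h1 this
      exact_mod_cast this
    have hp0 : (0:ℝ) < (4/3:ℝ)^(ℓ-3) := by positivity
    nlinarith [hpow, hbig, hub, hvgB1pos, hp0]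
  set U := B (r+1) with hUdef
  have hUX : ∀ y ∈ U, y ∉ X := by
    intro y hyU hyX
    obtain ⟨p, _, hplen⟩ := ballIn_walk H' Finset.univ (Finset.mem_univ u) (r+1) y hyU
    exact absurd (hblocked y hyX p) (not_lt.mpr (hplen.trans (by omega)))
  -- relative core exists
  have hBrU : B r ⊆ U := by rw [hUdef]; exact ballIn_mono H' Finset.univ u r
  have hlb : vg (B r) ≤ gvolIn H U U + 2 * F_E.card := by
    calc vg (B r) = ∑ v ∈ B r, gdeg H v := rfl
      _ ≤ ∑ v ∈ B r, (gdegIn H U v + dmg v) := Finset.sum_le_sum fun v hv => hdegin r v hv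
      _ = ∑ v ∈ B r, gdegIn H U v + ∑ v ∈ B r, dmg v := Finset.sum_add_distrib
      _ ≤ gvolIn H U U + 2 * F_E.card := by
          have h1 : ∑ v ∈ B r, gdegIn H U v ≤ gvolIn H U U :=
            Finset.sum_le_sum_of_subset hBrU
          have h2 := hdmgsum_le (B r)
          omega
  have hexistsT : ∃ T ⊆ U, T.Nonempty ∧ ∀ v ∈ T, gdeg H v ≤ 3 * gdegIn H T v := by
    apply exists_relative_core
    -- 2 * vg U < 3 * gvolIn H U U
    -- real arithmetic
    have hFk : (F_E.card : ℝ) ≤ (k:ℝ) * ℓ := by exact_mod_cast hFEcard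
    have hkℓ : (k:ℝ) * ℓ ≤ ((2*(h:ℝ)/3)+1) * (18*L) := by
      apply mul_le_mul hkh hℓL (by positivity) (by positivity)
    have hkℓ2 : (k:ℝ) * ℓ ≤ (h:ℝ) * (18 * L) := by
      have : (2*(h:ℝ)/3)+1 ≤ (h:ℝ) := by linarith
      nlinarith [hL1]
    have hLh : (18:ℝ) * L < 18 * (h:ℝ) / 300000 := by nlinarith
    have hvgB1R : ((h:ℝ) - k + 1) * h ≤ (vg (B 1) : ℝ) := by
      have h1 : ((h - k + 1 : ℕ) : ℝ) = (h:ℝ) - k + 1 := by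
        have : k ≤ h := hkh'
        push_cast [Nat.cast_sub this]
        ring
      rw [← h1]
      exact_mod_cast Nat.mul_le_mul_right h (le_refl (h-k+1)) |>.trans hvgB1
    have hB1Br : vg (B 1) ≤ vg (B r) := by
      apply hvgmono
      rw [hBdef]
      -- B 1 ⊆ B r since 1 ≤ r : monotone
      have : ∀ a b : ℕ, a ≤ b → ballIn H' Finset.univ u a ⊆ ballIn H' Finset.univ u b := by
        intro a b hab
        induction b with
        | zero => rw [Nat.le_zero.mp hab]
        | succ b ihb =>
          rcases Nat.eq_or_lt_of_le hab with rfl | hlt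
          · exact subset_rfl
          · exact (ihb (by omega)).trans (ballIn_mono H' Finset.univ u b)
      exact this 1 r hr1
    have hlbR : (vg (B r) : ℝ) ≤ (gvolIn H U U : ℝ) + 2 * F_E.card := by exact_mod_cast hlb
    have hrvolR : 3 * (vg U : ℝ) ≤ 4 * (vg (B r) : ℝ) := by exact_mod_cast hrvol
    have hBrR : (vg (B 1) : ℝ) ≤ (vg (B r) : ℝ) := by exact_mod_cast hB1Br
    -- conclude
    have hgoal : 2 * (vg U : ℝ) < 3 * (gvolIn H U U : ℝ) := by
      have hkbound : ((h:ℝ) - k + 1) ≥ (h:ℝ)/3 := by linarith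
      have hvgBrBig : (h:ℝ)/3 * h ≤ (vg (B r) : ℝ) := by nlinarith [hvgB1R, hBrR, hhR]
      have hFsmall : 18 * ((F_E.card:ℝ)) < (h:ℝ)/3 * h / 3 := by
        nlinarith [hFk, hkℓ2, hLh, hhR]
      nlinarith [hlbR, hrvolR, hvgBrBig, hFsmall]
    have hfinal : 2 * vg U < 3 * gvolIn H U U := by exact_mod_cast hgoal
    exact hfinal
  obtain ⟨T, hTU, hTne, hTcore⟩ := hexistsT
  have hT1 : ∀ v ∈ T, 1 ≤ gdegIn H T v := by
    intro v hv
    have h1 := hTcore v hv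
    have h2 := hmin v
    omega
  obtain ⟨W, hWT, hWne, hWdeg, hWexp⟩ := lemmaA H T hT1 hTne
  -- σ bounds
  have hσ2 : 2 ≤ gvolIn H T T := by
    obtain ⟨v, hv⟩ := hTne
    obtain ⟨z, hz⟩ := Finset.card_pos.mp (hT1 v hv)
    rw [Finset.mem_filter] at hz
    have hzv : z ≠ v := fun he => H.irrefl (he ▸ hz.2)
    have hsub : ({v, z} : Finset V) ⊆ T := by
      intro y hy
      rw [Finset.mem_insert, Finset.mem_singleton] at hy
      rcases hy with rfl | rfl
      exacts [hv, hz.1]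
    calc 2 = ∑ _x ∈ ({v, z} : Finset V), 1 := by
          rw [Finset.sum_const, Finset.card_insert_of_notMem (by simpa using hzv.symm),
            Finset.card_singleton]
          rfl
      _ ≤ ∑ x ∈ ({v, z} : Finset V), gdegIn H T x :=
          Finset.sum_le_sum fun x hx => hT1 x (hsub hx)
      _ ≤ gvolIn H T T := Finset.sum_le_sum_of_subset hsub
  have hσlog : Real.logb 2 ((gvolIn H T T : ℕ) : ℝ) ≤ 2 * L := by
    apply hn2L
    · omega
    · exact gvolIn_le_sq H T
  have hσlog1 : 1 ≤ Real.logb 2 ((gvolIn H T T : ℕ) : ℝ) := by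
    have h2 : Real.logb 2 (2:ℝ) = 1 := Real.logb_self_eq_one one_lt_two
    rw [← h2]
    apply (Real.logb_le_logb one_lt_two (by norm_num) (by exact_mod_cast Nat.lt_of_lt_of_le Nat.zero_lt_two hσ2)).mpr
    exact_mod_cast hσ2
  have hκ : (1/100000)/L ≤ 1 / (8 * Real.logb 2 ((gvolIn H T T : ℕ) : ℝ)) := by
    rw [div_le_div_iff₀ (by positivity) (by positivity)]
    nlinarith [hσlog, hσlog1, hLpos]
  have hWexp' : IsInducedExpander H W ((1/100000)/L) := by
    intro S hS hSne hWSne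
    have h1 := hWexp S hS hSne hWSne
    have h2 : (0:ℝ) ≤ min (gvolIn H W S : ℝ) (gvolIn H W (W \ S) : ℝ) := by
      apply le_min <;> positivity
    calc (1/100000)/L * min (gvolIn H W S : ℝ) (gvolIn H W (W \ S) : ℝ)
        ≤ 1 / (8 * Real.logb 2 ((gvolIn H T T : ℕ) : ℝ))
          * min (gvolIn H W S : ℝ) (gvolIn H W (W \ S) : ℝ) :=
          mul_le_mul_of_nonneg_right hκ h2
      _ ≤ (gcutIn H W S : ℝ) := h1
  -- degrees in W
  have hWdeg12 : ∀ v ∈ W, (h:ℝ) ≤ 12 * (gdegIn H W v : ℝ) := by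
    intro v hv
    have h1 := hWdeg v hv
    have h2 : (gdeg H v : ℝ) ≤ 3 * (gdegIn H T v : ℝ) := by exact_mod_cast hTcore v (hWT hv)
    have h3 : (h : ℝ) ≤ (gdeg H v : ℝ) := by exact_mod_cast hmin v
    linarith
  have hWdeg1 : ∀ v ∈ W, 1 ≤ gdegIn H W v := by
    intro v hv
    by_contra h0
    push_neg at h0
    have h00 : gdegIn H W v = 0 := by omega
    have := hWdeg12 v hv
    rw [h00] at this
    simp at this
    linarith [hhR]
  -- diameter
  have hφpos : (0:ℝ) < (1/100000)/L := by positivity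
  have hvolW1 : (1:ℝ) ≤ (gvolIn H W W : ℝ) := by
    obtain ⟨v, hv⟩ := hWne
    have h1 := hWdeg1 v hv
    have h2 : 1 ≤ gvolIn H W W :=
      le_trans h1 (Finset.single_le_sum (fun x _ => Nat.zero_le _) hv)
    exact_mod_cast h2
  obtain ⟨M, hM1, hM2⟩ := exists_pow_gt ((1/100000)/L) (gvolIn H W W : ℝ) hφpos hvolW1
  have hdiam := expander_diam H W ((1/100000)/L) hφpos hWexp' hWdeg1 M hM2
  have hMbound : (2 * M : ℝ) ≤ 3000 * L / ((1/100000)/L) := by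
    have hlogW : Real.logb 2 ((gvolIn H W W : ℕ) : ℝ) ≤ 2 * L := by
      apply hn2L
      · by_contra h0
        push_neg at h0
        have : gvolIn H W W = 0 := by omega
        rw [this] at hvolW1
        simp at hvolW1
        linarith
      · exact gvolIn_le_sq H W
    have hM1' : (M:ℝ) ≤ (2/((1/100000)/L) + 1) * (2*L + 2) := by
      refine hM1.trans ?_
      apply mul_le_mul_of_nonneg_left (by linarith) (by positivity)
    have hinv : 2/((1/100000)/L) = 200000 * L := by
      field_simp
      ring
    rw [hinv] at hM1'
    have htarget : 3000 * L / ((1/100000)/L) = 300000000 * L^2 := by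
      field_simp
      ring
    rw [htarget]
    nlinarith [hM1', hL1, sq_nonneg L]
  refine ⟨W, ?_, hWne, hWdeg12, hWexp', ?_⟩
  · rw [Finset.eq_empty_iff_forall_notMem]
    intro y hy
    rw [Finset.mem_inter] at hy
    exact hUX y (hTU (hWT hy.1)) hy.2
  · intro x hx y hy
    obtain ⟨p, hp1, hp2, hp3⟩ := hdiam x hx y hy
    refine ⟨p, hp1, hp2, ?_⟩
    calc (p.length : ℝ) ≤ (2*M : ℝ) := by exact_mod_cast hp3
      _ ≤ _ := hMbound

-- ## Part J : edge sets of walk families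

def walksEdgeSet {u : V} (G : SimpleGraph V) (l : List (Σ y : V, G.Walk u y)) :
    Finset (Sym2 V) :=
  l.foldr (fun pw acc => pw.2.edges.toFinset ∪ acc) ∅

lemma mem_walksEdgeSet {u : V} (G : SimpleGraph V) (l : List (Σ y : V, G.Walk u y))
    (ed : Sym2 V) : ed ∈ walksEdgeSet G l ↔ ∃ pw ∈ l, ed ∈ pw.2.edges := by
  induction l with
  | nil => simp [walksEdgeSet]
  | cons a t ih =>
    simp only [walksEdgeSet, List.foldr_cons, Finset.mem_union, List.mem_toFinset,
      List.mem_cons]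
    rw [show (t.foldr (fun pw acc => pw.2.edges.toFinset ∪ acc) ∅) = walksEdgeSet G t from rfl]
      at *
    rw [ih]
    constructor
    · rintro (h | ⟨pw, hpw, hed⟩)
      · exact ⟨a, Or.inl rfl, h⟩
      · exact ⟨pw, Or.inr hpw, hed⟩
    · rintro ⟨pw, (rfl | hpw), hed⟩
      · exact Or.inl hed
      · exact Or.inr ⟨pw, hpw, hed⟩

lemma card_walksEdgeSet {u : V} (G : SimpleGraph V) (l : List (Σ y : V, G.Walk u y))
    (ℓ : ℕ) (hlen : ∀ pw ∈ l, pw.2.length ≤ ℓ) :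
    (walksEdgeSet G l).card ≤ l.length * ℓ := by
  induction l with
  | nil => simp [walksEdgeSet]
  | cons a t ih =>
    have h1 : walksEdgeSet G (a :: t) = a.2.edges.toFinset ∪ walksEdgeSet G t := rfl
    rw [h1]
    have h2 : a.2.edges.toFinset.card ≤ ℓ := by
      calc a.2.edges.toFinset.card ≤ a.2.edges.length := a.2.edges.toFinset_card_le
        _ = a.2.length := a.2.length_edges
        _ ≤ ℓ := hlen a (List.mem_cons_self)
    have h3 := ih (fun pw hpw => hlen pw (List.mem_cons_of_mem a hpw))
    calc (a.2.edges.toFinset ∪ walksEdgeSet G t).card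
        ≤ a.2.edges.toFinset.card + (walksEdgeSet G t).card := Finset.card_union_le _ _
      _ ≤ ℓ + t.length * ℓ := by omega
      _ = (a :: t).length * ℓ := by rw [List.length_cons]; ring

lemma walksEdgeSet_at_start {u : V} (G : SimpleGraph V) (l : List (Σ y : V, G.Walk u y))
    (hpath : ∀ pw ∈ l, pw.2.IsPath) :
    ((walksEdgeSet G l).filter (fun e => u ∈ e)).card ≤ l.length := by
  induction l with
  | nil => simp [walksEdgeSet]
  | cons a t ih =>
    have h1 : walksEdgeSet G (a :: t) = a.2.edges.toFinset ∪ walksEdgeSet G t := rfl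
    rw [h1, Finset.filter_union]
    have h2 := path_edges_at_start_card G a.2 (hpath a (List.mem_cons_self))
    have h3 := ih (fun pw hpw => hpath pw (List.mem_cons_of_mem a hpw))
    calc ((a.2.edges.toFinset.filter (fun e => u ∈ e))
          ∪ ((walksEdgeSet G t).filter (fun e => u ∈ e))).card
        ≤ (a.2.edges.toFinset.filter (fun e => u ∈ e)).card
          + ((walksEdgeSet G t).filter (fun e => u ∈ e)).card := Finset.card_union_le _ _
      _ ≤ 1 + t.length := by omega
      _ = (a :: t).length := by rw [List.length_cons]; omega

lemma walksEdgeSet_edges {u : V} (G : SimpleGraph V) (l : List (Σ y : V, G.Walk u y)) :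
    ∀ ed ∈ walksEdgeSet G l, ed ∈ G.edgeSet := by
  intro ed hed
  obtain ⟨pw, _, h⟩ := (mem_walksEdgeSet G l ed).mp hed
  exact pw.2.edges_subset_edgeSet h

lemma gdeg_le_card_sub_one (G : SimpleGraph V) (v : V) :
    gdeg G v + 1 ≤ Fintype.card V := by
  have hsub : Finset.univ.filter (fun y => G.Adj v y) ⊆ Finset.univ.erase v := by
    intro y hy
    rw [Finset.mem_filter] at hy
    rw [Finset.mem_erase]
    exact ⟨fun hc => G.irrefl (hc ▸ hy.2), Finset.mem_univ y⟩
  have h1 : gdeg G v ≤ (Finset.univ.erase v).card := Finset.card_le_card hsub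
  rw [Finset.card_erase_of_mem (Finset.mem_univ v)] at h1
  have h2 : 1 ≤ Fintype.card V := Fintype.card_pos_iff.mpr ⟨v⟩
  have h3 : (Finset.univ : Finset V).card = Fintype.card V := Finset.card_univ
  omega

lemma card_le_sym2 : Fintype.card V ≤ Fintype.card (Sym2 V) := by
  apply Fintype.card_le_of_injective (fun v => s(v, v))
  intro a b hab
  have := Sym2.eq_iff.mp hab
  tauto

-- ## Part K : maximal families

lemma max_family (good : Finset V → Prop) :
    ∃ F : Finset (Finset V), (∀ K ∈ F, good K) ∧
      (∀ K ∈ F, ∀ K' ∈ F, K ≠ K' → Disjoint K K') ∧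
      (∀ K', good K' → K'.Nonempty → (∀ K ∈ F, Disjoint K' K) → False) := by
  classical
  set fam : Finset (Finset V) → Prop := fun F => (∀ K ∈ F, good K) ∧
      (∀ K ∈ F, ∀ K' ∈ F, K ≠ K' → Disjoint K K') with hfam
  obtain ⟨F, hFmem, hFmax⟩ := Finset.exists_max_image
    ((Finset.univ : Finset (Finset (Finset V))).filter fam) (fun F => ∑ K ∈ F, K.card)
    ⟨∅, Finset.mem_filter.mpr ⟨Finset.mem_univ _, by constructor <;> simp⟩⟩
  have hFfam : fam F := (Finset.mem_filter.mp hFmem).2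
  refine ⟨F, hFfam.1, hFfam.2, ?_⟩
  intro K' hgood hne hdisj
  have hK'F : K' ∉ F := by
    intro hc
    obtain ⟨v, hv⟩ := hne
    exact Finset.disjoint_left.mp (hdisj K' hc) hv hv
  have hfam' : fam (insert K' F) := by
    constructor
    · intro K hK
      rcases Finset.mem_insert.mp hK with rfl | hK
      · exact hgood
      · exact hFfam.1 K hK
    · intro K₁ hK₁ K₂ hK₂ hne12
      rcases Finset.mem_insert.mp hK₁ with rfl | hK₁ <;>
        rcases Finset.mem_insert.mp hK₂ with h2 | hK₂
      · exact absurd h2.symm hne12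
      · exact hdisj K₂ hK₂
      · rw [h2] at hne12 ⊢
        exact (hdisj K₁ hK₁).symm
      · exact hFfam.2 K₁ hK₁ K₂ hK₂ hne12
  have hle := hFmax (insert K' F) (Finset.mem_filter.mpr ⟨Finset.mem_univ _, hfam'⟩)
  rw [Finset.sum_insert hK'F] at hle
  have : 1 ≤ K'.card := Finset.card_pos.mpr hne
  omega

-- ## Part L : the easy regime

lemma easy_regime (H : SimpleGraph V) (h : ℕ) (hh : 1 ≤ h)
    (hmin : ∀ v : V, h ≤ gdeg H v)
    (L : ℝ) (hL1 : 1 ≤ L)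
    (hreg : (h:ℝ) ≤ 300000 * L) :
    ∃ F : Finset (Finset V),
      (∀ K ∈ F, ∀ K' ∈ F, K ≠ K' → Disjoint K K') ∧
      (F.card : ℝ) ≤ 3000 * (Fintype.card V : ℝ) * L / (h : ℝ) ∧
      (∀ K ∈ F,
        IsInducedExpander H K (1/100000 / L) ∧
        (∀ u ∈ K, 1/100000 / L * (h : ℝ) / 3 ≤ (gdegIn H K u : ℝ)) ∧
        (∀ u ∈ K, ∀ v ∈ K, ∃ p : H.Walk u v, p.IsPath ∧
          (∀ x ∈ p.support, x ∈ K) ∧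
          (p.length : ℝ) ≤ 3000 * L / (1/100000 / L))) ∧
      (∀ u : V, (∀ K ∈ F, u ∉ K) →
        ∃ (t : ℕ) (e : Fin t → V) (P : ∀ i : Fin t, H.Walk u (e i)),
          (2 * (h : ℝ)) / 3 ≤ (t : ℝ) ∧
          (∀ i : Fin t, (P i).IsPath ∧
            ((P i).length : ℝ) ≤ 3000 * L ∧
            ∃ K ∈ F, e i ∈ K) ∧
          (∀ i j : Fin t, i ≠ j → ∀ ed ∈ (P i).edges, ed ∉ (P j).edges)) := by
  classical
  have hLpos : (0:ℝ) < L := by linarith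
  have hhpos : (0:ℝ) < (h:ℝ) := by exact_mod_cast hh
  set m : ℕ := ⌈(h:ℝ)/(3000*L)⌉₊ with hmdef
  set s : ℕ := max 2 m with hsdef
  have hs2 : 2 ≤ s := le_max_left _ _
  have hms : m ≤ s := le_max_right _ _
  have hhs : (h:ℝ) ≤ 3000 * L * s := by
    have h1 : (h:ℝ)/(3000*L) ≤ (m:ℝ) := Nat.le_ceil _
    have h2 : (m:ℝ) ≤ (s:ℝ) := by exact_mod_cast hms
    have h3 : (h:ℝ)/(3000*L) ≤ (s:ℝ) := h1.trans h2
    rw [div_le_iff₀ (by positivity)] at h3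
    linarith
  have hs100 : s ≤ 100 := by
    apply max_le (by norm_num)
    rw [hmdef]
    apply Nat.ceil_le.mpr
    rw [div_le_iff₀ (by positivity)]
    push_cast
    nlinarith
  have hs101 : (s:ℝ) ≤ 101 := by
    have : (s:ℝ) ≤ 100 := by exact_mod_cast hs100
    linarith
  -- good pieces
  set good : Finset V → Prop := fun K => ∃ x₀ ∈ K, K.card = s ∧
      (∀ v ∈ K, ∃ z ∈ K, H.Adj v z) ∧
      (∀ y ∈ K, ∃ p : H.Walk x₀ y, (∀ a ∈ p.support, a ∈ K) ∧ p.length ≤ s) with hgood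
  obtain ⟨F, hFgood, hFdisj, hFmax⟩ := max_family good
  set X := F.biUnion id with hXdef
  have hKX : ∀ K ∈ F, K ⊆ X := by
    intro K hK v hv
    rw [hXdef]
    exact Finset.mem_biUnion.mpr ⟨K, hK, hv⟩
  refine ⟨F, hFdisj, ?_, ?_, ?_⟩
  · -- count
    have hsum : ∑ K ∈ F, K.card = X.card := (Finset.card_biUnion hFdisj).symm
    have hXn : X.card ≤ Fintype.card V :=
      (Finset.card_le_card (Finset.subset_univ X)).trans (le_of_eq Finset.card_univ)
    have hcards : ∀ K ∈ F, K.card = s := by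
      intro K hK
      obtain ⟨x₀, _, hcard, _, _⟩ := hFgood K hK
      exact hcard
    have hFs : F.card * s ≤ Fintype.card V := by
      calc F.card * s = ∑ K ∈ F, s := by rw [Finset.sum_const, smul_eq_mul]
        _ = ∑ K ∈ F, K.card := Finset.sum_congr rfl fun K hK => (hcards K hK).symm
        _ = X.card := hsum
        _ ≤ _ := hXn
    rw [le_div_iff₀ hhpos]
    have hFsR : (F.card : ℝ) * s ≤ (Fintype.card V : ℝ) := by exact_mod_cast hFs
    have hF0 : (0:ℝ) ≤ (F.card : ℝ) := Nat.cast_nonneg _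
    calc (F.card:ℝ) * h ≤ (F.card:ℝ) * (3000 * L * s) :=
          mul_le_mul_of_nonneg_left hhs hF0
      _ = 3000 * L * ((F.card:ℝ) * s) := by ring
      _ ≤ 3000 * L * (Fintype.card V : ℝ) := by
          apply mul_le_mul_of_nonneg_left hFsR (by positivity)
      _ = 3000 * (Fintype.card V : ℝ) * L := by ring
  · -- (i)
    intro K hK
    obtain ⟨x₀, hx₀, hcardK, hmindeg, hpaths⟩ := hFgood K hK
    have hvolK : gvolIn H K K ≤ s * s := by
      calc gvolIn H K K ≤ ∑ _v ∈ K, K.card :=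
            Finset.sum_le_sum fun v _ => gdegIn_le_card H K v
        _ = K.card * K.card := by rw [Finset.sum_const, smul_eq_mul]
        _ = s * s := by rw [hcardK]
    refine ⟨?_, ?_, ?_⟩
    · -- expander
      intro S hS hSne hKSne
      have hcut1 : 1 ≤ gcutIn H K S := by
        apply Finset.card_pos.mpr
        by_cases hx₀S : x₀ ∈ S
        · obtain ⟨y, hy⟩ := hKSne
          rw [Finset.mem_sdiff] at hy
          obtain ⟨p, hp1, _⟩ := hpaths y hy.1
          obtain ⟨x, hxS, y', hy'S, hadj, hy'supp⟩ := walk_cross H S p hx₀S hy.2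
          exact ⟨(x, y'), Finset.mem_filter.mpr ⟨Finset.mem_univ _,
            hxS, hp1 y' hy'supp, hy'S, hadj⟩⟩
        · obtain ⟨y, hyS⟩ := hSne
          obtain ⟨p, hp1, _⟩ := hpaths y (hS hyS)
          have hx₀KS : x₀ ∈ K \ S := Finset.mem_sdiff.mpr ⟨hx₀, hx₀S⟩
          have hyKS : y ∉ K \ S := fun hc => (Finset.mem_sdiff.mp hc).2 hyS
          obtain ⟨x, hxKS, y', hy'KS, hadj, hy'supp⟩ := walk_cross H (K\S) p hx₀KS hyKS
          have hy'K : y' ∈ K := hp1 y' hy'supp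
          have hy'S : y' ∈ S := by
            by_contra hc
            exact hy'KS (Finset.mem_sdiff.mpr ⟨hy'K, hc⟩)
          rw [Finset.mem_sdiff] at hxKS
          exact ⟨(y', x), Finset.mem_filter.mpr ⟨Finset.mem_univ _,
            hy'S, hxKS.1, hxKS.2, hadj.symm⟩⟩
      have hvolS : (gvolIn H K S : ℝ) ≤ s * s := by
        have := (gvolIn_le_of_subset H hS).trans hvolK
        exact_mod_cast this
      have hminle : min (gvolIn H K S : ℝ) (gvolIn H K (K \ S) : ℝ) ≤ s * s :=
        (min_le_left _ _).trans hvolS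
      have hcut1R : (1:ℝ) ≤ (gcutIn H K S : ℝ) := by exact_mod_cast hcut1
      have hmin0 : (0:ℝ) ≤ min (gvolIn H K S : ℝ) (gvolIn H K (K \ S) : ℝ) := by
        apply le_min <;> positivity
      calc 1/100000 / L * min (gvolIn H K S : ℝ) (gvolIn H K (K \ S) : ℝ)
          ≤ 1/100000 / L * (s * s) := by
            apply mul_le_mul_of_nonneg_left hminle (by positivity)
        _ ≤ 1 := by
            rw [div_mul_eq_mul_div, div_le_one hLpos]
            nlinarith [hs101, hL1]
        _ ≤ (gcutIn H K S : ℝ) := hcut1R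
    · -- degree
      intro uu huu
      obtain ⟨z, hz, hadj⟩ := hmindeg uu huu
      have h1 : 1 ≤ gdegIn H K uu :=
        Finset.card_pos.mpr ⟨z, Finset.mem_filter.mpr ⟨hz, hadj⟩⟩
      have h1R : (1:ℝ) ≤ (gdegIn H K uu : ℝ) := by exact_mod_cast h1
      have : 1/100000 / L * (h:ℝ) / 3 ≤ 1 := by
        rw [div_le_one (by norm_num : (0:ℝ) < 3), div_mul_eq_mul_div, div_le_iff₀ hLpos]
        nlinarith
      linarith
    · -- diameter
      intro uu huu vv hvv
      obtain ⟨p, hp1, hp2⟩ := hpaths uu huu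
      obtain ⟨q, hq1, hq2⟩ := hpaths vv hvv
      set w := p.reverse.append q with hw
      have hwsupp : ∀ a ∈ w.support, a ∈ K := by
        intro a ha
        rw [hw, SimpleGraph.Walk.support_append] at ha
        rcases List.mem_append.mp ha with ha | ha
        · rw [SimpleGraph.Walk.support_reverse] at ha
          exact hp1 a (List.mem_reverse.mp ha)
        · exact hq1 a (List.mem_of_mem_tail ha)
      have hwlen : w.length ≤ 2*s := by
        rw [hw, SimpleGraph.Walk.length_append, SimpleGraph.Walk.length_reverse]
        omega
      refine ⟨w.bypass, SimpleGraph.Walk.bypass_isPath w,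
        fun a ha => hwsupp a (SimpleGraph.Walk.support_bypass_subset w ha), ?_⟩
      have hlen : (w.bypass.length : ℝ) ≤ 2*s := by
        exact_mod_cast (SimpleGraph.Walk.length_bypass_le w).trans hwlen
      have htarget : 3000 * L / (1/100000 / L) = 300000000 * L^2 := by
        field_simp; ring
      rw [htarget]
      nlinarith [hs101, hL1, sq_nonneg L]
  · -- (ii)
    intro u hu
    have huX : u ∉ X := by
      intro hc
      obtain ⟨K, hK, huK⟩ := Finset.mem_biUnion.mp hc
      exact hu K hK huK
    set T := (Finset.univ : Finset V) \ X with hTdef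
    have huT : u ∈ T := Finset.mem_sdiff.mpr ⟨Finset.mem_univ u, huX⟩
    set Cu := T.filter (fun y => ∃ p : H.Walk u y, ∀ a ∈ p.support, a ∈ T) with hCudef
    have huCu : u ∈ Cu := by
      rw [hCudef, Finset.mem_filter]
      exact ⟨huT, SimpleGraph.Walk.nil, by simp [huT]⟩
    have hCusmall : Cu.card < s := by
      by_contra hc
      push_neg at hc
      obtain ⟨K', hK'T, x₀', hx₀', hcard', hmd', hpaths'⟩ :=
        grow_piece H T u huT s (by omega) hc
      have hgood' : good K' := ⟨x₀', hx₀', hcard', hmd' hs2, hpaths'⟩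
      have hne' : K'.Nonempty := Finset.card_pos.mp (by omega)
      apply hFmax K' hgood' hne'
      intro K hKF
      rw [Finset.disjoint_left]
      intro a haK' haK
      have haT : a ∈ T := hK'T haK'
      have haX : a ∈ X := hKX K hKF haK
      exact (Finset.mem_sdiff.mp haT).2 haX
    set A := Finset.univ.filter (fun v => H.Adj u v ∧ v ∈ X) with hAdef
    have hAX : ∀ v ∈ A, H.Adj u v ∧ v ∈ X := by
      intro v hv
      exact (Finset.mem_filter.mp hv).2
    have hnb : gdeg H u ≤ A.card + (s - 2) := by
      have hsub : Finset.univ.filter (fun y => H.Adj u y) ⊆ A ∪ Cu.erase u := by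
        intro v hv
        rw [Finset.mem_filter] at hv
        rw [Finset.mem_union]
        by_cases hvX : v ∈ X
        · exact Or.inl (Finset.mem_filter.mpr ⟨Finset.mem_univ v, hv.2, hvX⟩)
        · right
          rw [Finset.mem_erase]
          have hvT : v ∈ T := Finset.mem_sdiff.mpr ⟨Finset.mem_univ v, hvX⟩
          refine ⟨hv.2.ne', ?_⟩
          rw [hCudef, Finset.mem_filter]
          refine ⟨hvT, SimpleGraph.Walk.cons hv.2 SimpleGraph.Walk.nil, ?_⟩
          intro a ha
          rw [SimpleGraph.Walk.support_cons] at ha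
          rcases List.mem_cons.mp ha with rfl | ha
          · exact huT
          · rw [SimpleGraph.Walk.support_nil, List.mem_singleton] at ha
            exact ha ▸ hvT
      have h1 : (Finset.univ.filter (fun y => H.Adj u y)).card
          ≤ A.card + (Cu.erase u).card :=
        (Finset.card_le_card hsub).trans (Finset.card_union_le _ _)
      have h2 : (Cu.erase u).card = Cu.card - 1 := Finset.card_erase_of_mem huCu
      have h3 : 1 ≤ Cu.card := Finset.card_pos.mpr ⟨u, huCu⟩
      have h4 : gdeg H u = (Finset.univ.filter (fun y => H.Adj u y)).card := rfl
      omega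
    have h3s : 3 * s ≤ h + 6 := by
      rcases le_or_gt m 2 with hm2 | hm2
      · have : s = 2 := by omega
        omega
      · have hsm : s = m := by omega
        have h1 : m - 1 < ⌈(h:ℝ)/(3000*L)⌉₊ := by omega
        have h2 : ((m - 1 : ℕ) : ℝ) < (h:ℝ)/(3000*L) := Nat.lt_ceil.mp h1
        have h3 : ((m - 1 : ℕ) : ℝ) = (m:ℝ) - 1 := by
          have hm1 : (1:ℕ) ≤ m := by omega
          rw [Nat.cast_sub hm1, Nat.cast_one]
        rw [h3] at h2
        have h4 : ((m:ℝ) - 1) * (3000 * L) < (h:ℝ) :=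
          (lt_div_iff₀ (by positivity)).mp h2
        have hm3 : (3:ℝ) ≤ (m:ℝ) := by exact_mod_cast hm2
        have hfin : (3 * s : ℝ) ≤ (h:ℝ) + 6 := by
          rw [hsm]
          push_cast
          nlinarith [hL1, h4, hm3]
        exact_mod_cast hfin
    have h2h3t : 2 * h ≤ 3 * A.card := by
      have := hmin u
      omega
    have h2h3tR : (2 * (h:ℝ)) / 3 ≤ (A.card : ℝ) := by
      rw [div_le_iff₀ (by norm_num : (0:ℝ) < 3)]
      have : (2 * h : ℝ) ≤ 3 * (A.card:ℝ) := by exact_mod_cast h2h3t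
      linarith
    refine ⟨A.card, fun i => (A.equivFin.symm i : V),
      fun i => SimpleGraph.Walk.cons (hAX _ (A.equivFin.symm i).2).1 SimpleGraph.Walk.nil,
      h2h3tR, ?_, ?_⟩
    · intro i
      have hmem := hAX _ (A.equivFin.symm i).2
      refine ⟨?_, ?_, ?_⟩
      · rw [SimpleGraph.Walk.isPath_def, SimpleGraph.Walk.support_cons,
          SimpleGraph.Walk.support_nil]
        simp [hmem.1.ne]
      · simp only [SimpleGraph.Walk.length_cons, SimpleGraph.Walk.length_nil]
        push_cast
        linarith
      · obtain ⟨K, hK, hmemK⟩ := Finset.mem_biUnion.mp hmem.2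
        exact ⟨K, hK, hmemK⟩
    · intro i j hij ed hedi hedj
      simp only [SimpleGraph.Walk.edges_cons, SimpleGraph.Walk.edges_nil,
        List.mem_singleton] at hedi hedj
      rw [hedi] at hedj
      have heq : (A.equivFin.symm i : V) = (A.equivFin.symm j : V) :=
        Sym2.congr_right.mp hedj
      exact hij (A.equivFin.symm.injective (Subtype.ext heq))

-- ## Part M : the hard regime

lemma hard_regime (H : SimpleGraph V) (h : ℕ) (hh : 1 ≤ h)
    (hmin : ∀ v : V, h ≤ gdeg H v)
    (L : ℝ) (hL1 : 1 ≤ L)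
    (h2L : (2:ℝ)^L = (Fintype.card V : ℝ))
    (hn2L : ∀ m : ℕ, 1 ≤ m → m ≤ Fintype.card V * Fintype.card V →
      Real.logb 2 (m:ℝ) ≤ 2 * L)
    (hreg : 300000 * L < (h:ℝ)) :
    ∃ F : Finset (Finset V),
      (∀ K ∈ F, ∀ K' ∈ F, K ≠ K' → Disjoint K K') ∧
      (F.card : ℝ) ≤ 3000 * (Fintype.card V : ℝ) * L / (h : ℝ) ∧
      (∀ K ∈ F,
        IsInducedExpander H K (1/100000 / L) ∧
        (∀ u ∈ K, 1/100000 / L * (h : ℝ) / 3 ≤ (gdegIn H K u : ℝ)) ∧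
        (∀ u ∈ K, ∀ v ∈ K, ∃ p : H.Walk u v, p.IsPath ∧
          (∀ x ∈ p.support, x ∈ K) ∧
          (p.length : ℝ) ≤ 3000 * L / (1/100000 / L))) ∧
      (∀ u : V, (∀ K ∈ F, u ∉ K) →
        ∃ (t : ℕ) (e : Fin t → V) (P : ∀ i : Fin t, H.Walk u (e i)),
          (2 * (h : ℝ)) / 3 ≤ (t : ℝ) ∧
          (∀ i : Fin t, (P i).IsPath ∧
            ((P i).length : ℝ) ≤ 3000 * L ∧
            ∃ K ∈ F, e i ∈ K) ∧
          (∀ i j : Fin t, i ≠ j → ∀ ed ∈ (P i).edges, ed ∉ (P j).edges)) := by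
  classical
  have hLpos : (0:ℝ) < L := by linarith
  have hhR : (300000:ℝ) ≤ (h:ℝ) := by nlinarith
  have hhpos : (0:ℝ) < (h:ℝ) := by linarith
  have hh3 : 3 ≤ h := by exact_mod_cast (by linarith : (3:ℝ) ≤ (h:ℝ))
  have hn2R : (2:ℝ) ≤ (Fintype.card V : ℝ) := by
    rw [← h2L]
    calc (2:ℝ) = (2:ℝ)^(1:ℝ) := (Real.rpow_one 2).symm
      _ ≤ (2:ℝ)^L := Real.rpow_le_rpow_of_exponent_le (by norm_num) hL1
  have hnpos : (0:ℝ) < (Fintype.card V : ℝ) := by linarith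
  -- the length budget ℓ
  set ℓ : ℕ := 5 * (⌈L⌉₊ + 1) + 3 with hℓdef
  have hceil : L ≤ (⌈L⌉₊ : ℝ) := Nat.le_ceil L
  have hceil' : (⌈L⌉₊ : ℝ) ≤ L + 1 := (Nat.ceil_lt_add_one (by linarith)).le
  have hℓL : (ℓ:ℝ) ≤ 18 * L := by
    rw [hℓdef]
    push_cast
    nlinarith
  have hℓ5 : 5 ≤ ℓ := by rw [hℓdef]; omega
  have hpow : ((Fintype.card V : ℝ))^2 < (4/3:ℝ)^(ℓ - 3) := by
    have he : ℓ - 3 = 5 * (⌈L⌉₊ + 1) := by omega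
    rw [he, pow_mul]
    have h45 : (4:ℝ) ≤ (4/3:ℝ)^5 := by norm_num
    have hk : ((4:ℝ))^(⌈L⌉₊ + 1) ≤ ((4/3:ℝ)^5)^(⌈L⌉₊+1) :=
      pow_le_pow_left₀ (by norm_num) h45 _
    have e1 : (4:ℝ)^L = ((Fintype.card V:ℝ))^2 := by
      have e2 : (4:ℝ) = (2:ℝ)^(2:ℝ) := by
        rw [show ((2:ℝ):ℝ) = ((2:ℕ):ℝ) by norm_num, Real.rpow_natCast]
        norm_num
      rw [e2, ← Real.rpow_mul (by norm_num), mul_comm, Real.rpow_mul (by norm_num), h2L]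
      rw [show ((2:ℝ):ℝ) = ((2:ℕ):ℝ) by norm_num, Real.rpow_natCast]
    have e3 : ((Fintype.card V:ℝ))^2 ≤ (4:ℝ)^(⌈L⌉₊:ℕ) := by
      rw [← e1, ← Real.rpow_natCast (4:ℝ) ⌈L⌉₊]
      exact Real.rpow_le_rpow_of_exponent_le (by norm_num) hceil
    have e4 : (4:ℝ)^(⌈L⌉₊ + 1) = 4 * (4:ℝ)^(⌈L⌉₊:ℕ) := by
      rw [pow_succ]; ring
    have e5 : (0:ℝ) < ((Fintype.card V:ℝ))^2 := by positivity
    nlinarith [e3, hk]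
  -- the family of hard cores
  set good : Finset V → Prop := fun K => K.Nonempty ∧
      (∀ v ∈ K, (h:ℝ) ≤ 12 * (gdegIn H K v : ℝ)) ∧
      IsInducedExpander H K (1/100000 / L) ∧
      (∀ x ∈ K, ∀ y ∈ K, ∃ p : H.Walk x y, p.IsPath ∧ (∀ a ∈ p.support, a ∈ K) ∧
        (p.length:ℝ) ≤ 3000 * L / (1/100000 / L)) with hgood
  obtain ⟨F, hFgood, hFdisj, hFmax⟩ := max_family good
  set X := F.biUnion id with hXdef
  have hKX : ∀ K ∈ F, K ⊆ X := by
    intro K hK v hv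
    rw [hXdef]
    exact Finset.mem_biUnion.mpr ⟨K, hK, hv⟩
  refine ⟨F, hFdisj, ?_, ?_, ?_⟩
  · -- count
    have hKcard : ∀ K ∈ F, (h:ℝ) ≤ 12 * (K.card:ℝ) := by
      intro K hK
      obtain ⟨⟨v, hv⟩, hdeg, _, _⟩ := hFgood K hK
      have h1 := hdeg v hv
      have h2R : (gdegIn H K v:ℝ) ≤ (K.card:ℝ) := by exact_mod_cast gdegIn_le_card H K v
      linarith
    have hsum : ∑ K ∈ F, K.card = X.card := (Finset.card_biUnion hFdisj).symm
    have hXn : X.card ≤ Fintype.card V :=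
      (Finset.card_le_card (Finset.subset_univ X)).trans (le_of_eq Finset.card_univ)
    have hkey : (F.card:ℝ) * h ≤ 12 * (Fintype.card V : ℝ) := by
      have c1 : (F.card:ℝ) * h = ∑ _K ∈ F, (h:ℝ) := by
        rw [Finset.sum_const, nsmul_eq_mul]
      have c2 : ∑ _K ∈ F, (h:ℝ) ≤ ∑ K ∈ F, 12*(K.card:ℝ) :=
        Finset.sum_le_sum hKcard
      have c3 : ∑ K ∈ F, 12*(K.card:ℝ) = 12 * ((∑ K ∈ F, K.card : ℕ):ℝ) := by
        rw [← Finset.mul_sum]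
        push_cast
        ring
      have c4 : ((∑ K ∈ F, K.card : ℕ):ℝ) ≤ (Fintype.card V : ℝ) := by
        exact_mod_cast hsum ▸ hXn
      calc (F.card:ℝ) * h = ∑ _K ∈ F, (h:ℝ) := c1
        _ ≤ 12 * ((∑ K ∈ F, K.card : ℕ):ℝ) := by rw [← c3]; exact c2
        _ ≤ 12 * (Fintype.card V : ℝ) := by linarith
    rw [le_div_iff₀ hhpos]
    calc (F.card:ℝ) * h ≤ 12 * (Fintype.card V:ℝ) := hkey
      _ ≤ 3000 * (Fintype.card V:ℝ) * L := by nlinarith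
  · -- (i)
    intro K hK
    obtain ⟨hne, hdeg, hexp, hdiam⟩ := hFgood K hK
    refine ⟨hexp, ?_, hdiam⟩
    intro uu huu
    have h1 := hdeg uu huu
    have hq : 1/100000 / L ≤ 1/4 := by
      rw [div_le_iff₀ hLpos]
      nlinarith
    have h2 : 1/100000 / L * (h:ℝ) ≤ 1/4 * (h:ℝ) :=
      mul_le_mul_of_nonneg_right hq (Nat.cast_nonneg h)
    linarith
  · -- (ii)
    intro u hu
    have huX : u ∉ X := by
      intro hc
      obtain ⟨K, hK, huK⟩ := Finset.mem_biUnion.mp hc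
      exact hu K hK huK
    set PathOK : (Σ y : V, H.Walk u y) → Prop := fun pw =>
      pw.2.IsPath ∧ pw.2.length ≤ ℓ ∧ pw.1 ∈ X with hPOK
    set Mk : ℕ → Prop := fun mm => ∃ l : List (Σ y : V, H.Walk u y), l.length = mm ∧
        (∀ pw ∈ l, PathOK pw) ∧
        l.Pairwise (fun a b => ∀ ed ∈ a.2.edges, ed ∉ b.2.edges) with hMkdef
    have hM0 : Mk 0 := ⟨[], rfl, by simp, List.Pairwise.nil⟩
    set kk := Nat.findGreatest Mk (Fintype.card (Sym2 V)) with hkkdef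
    have hMkk : Mk kk := Nat.findGreatest_spec (Nat.zero_le _) hM0
    obtain ⟨l, hlen, hlOK, hlpair⟩ := hMkk
    have hmain : 2 * (h:ℝ) ≤ 3 * (kk:ℝ) := by
      by_contra hc
      push_neg at hc
      set F_E := walksEdgeSet H l with hFEdef
      have hFEedges := walksEdgeSet_edges H l
      have hFEcard : F_E.card ≤ kk * ℓ := by
        rw [← hlen]
        exact card_walksEdgeSet H l ℓ (fun pw hpw => (hlOK pw hpw).2.1)
      have hFEu : (F_E.filter (fun e => u ∈ e)).card ≤ kk := by
        rw [← hlen]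
        exact walksEdgeSet_at_start H l (fun pw hpw => (hlOK pw hpw).1)
      have hblocked : ∀ y ∈ X, ∀ p : (H.deleteEdges ↑F_E).Walk u y, ℓ < p.length := by
        intro y hyX p
        by_contra hple
        push_neg at hple
        set q := p.bypass with hqdef
        have hqpath : q.IsPath := p.bypass_isPath
        have hqlen : q.length ≤ ℓ := (p.length_bypass_le).trans hple
        have hqedges : ∀ e ∈ q.edges, e ∈ H.edgeSet := by
          intro e he
          have h1 : e ∈ (H.deleteEdges ↑F_E).edgeSet := q.edges_subset_edgeSet he
          rw [SimpleGraph.edgeSet_deleteEdges] at h1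
          exact h1.1
        have hqavoid : ∀ e ∈ q.edges, e ∉ F_E := by
          intro e he hc2
          have h1 : e ∈ (H.deleteEdges ↑F_E).edgeSet := q.edges_subset_edgeSet he
          rw [SimpleGraph.edgeSet_deleteEdges] at h1
          exact h1.2 hc2
        set pH := q.transfer H hqedges with hpHdef
        have hpHpath : pH.IsPath := hqpath.transfer _
        have hpHedges : pH.edges = q.edges := q.edges_transfer hqedges
        have hpHlen : pH.length = q.length := q.length_transfer hqedges
        have hnew : Mk (kk+1) := by
          refine ⟨⟨y, pH⟩ :: l, by rw [List.length_cons, hlen], ?_, ?_⟩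
          · intro pw hpw
            rcases List.mem_cons.mp hpw with rfl | hpw
            · exact ⟨hpHpath, by rw [hpHlen]; exact hqlen, hyX⟩
            · exact hlOK pw hpw
          · rw [List.pairwise_cons]
            refine ⟨?_, hlpair⟩
            intro pw hpw ed hed hedpw
            have h1 : ed ∈ F_E := by
              rw [hFEdef, mem_walksEdgeSet]
              exact ⟨pw, hpw, hedpw⟩
            have h2 : ed ∈ q.edges := by rw [← hpHedges]; exact hed
            exact hqavoid ed h2 h1
        have hkkh : kk + 1 ≤ Fintype.card (Sym2 V) := by
          have hhn : h + 1 ≤ Fintype.card V := by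
            have g1 := gdeg_le_card_sub_one H u
            have g2 := hmin u
            omega
          have h1 : (kk:ℝ) < (h:ℝ) := by nlinarith
          have h2 : kk < h := by exact_mod_cast h1
          have h3 := card_le_sym2 (V := V)
          omega
        exact Nat.findGreatest_is_greatest (by omega : kk < kk + 1) hkkh hnew
      have hkhR : (kk:ℝ) ≤ 2*(h:ℝ)/3 + 1 := by nlinarith
      obtain ⟨W, hWX, hWne, hWdeg, hWexp, hWdiam⟩ := hard_new_core H h X u hmin L hL1
        hn2L hreg ℓ kk hkhR hℓL hℓ5 hpow F_E hFEedges hFEcard hFEu hblocked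
      apply hFmax W ⟨hWne, hWdeg, hWexp, hWdiam⟩ hWne
      intro K hKF
      rw [Finset.disjoint_left]
      intro a haW haK
      have haX : a ∈ X := hKX K hKF haK
      rw [Finset.eq_empty_iff_forall_notMem] at hWX
      exact hWX a (Finset.mem_inter.mpr ⟨haW, haX⟩)
    have hlen23 : (2*(h:ℝ))/3 ≤ (l.length:ℝ) := by
      rw [hlen]
      linarith
    refine ⟨l.length, fun i => (l.get i).1, fun i => (l.get i).2, hlen23, ?_, ?_⟩
    · intro i
      have hOK := hlOK (l.get i) (List.get_mem l i)
      refine ⟨hOK.1, ?_, ?_⟩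
      · calc ((l.get i).2.length : ℝ) ≤ (ℓ:ℝ) := by exact_mod_cast hOK.2.1
          _ ≤ 18*L := hℓL
          _ ≤ 3000*L := by linarith
      · obtain ⟨K, hK, hm⟩ := Finset.mem_biUnion.mp hOK.2.2
        exact ⟨K, hK, hm⟩
    · intro i j hij ed hedi hedj
      have hpair := List.pairwise_iff_get.mp hlpair
      rcases lt_or_gt_of_ne (fun hc : i = j => hij hc) with hlt | hgt
      · exact hpair i j hlt ed hedi hedj
      · exact hpair j i hgt ed hedj hedi


/-- Expanding core decomposition: there are constants `c, C > 0` such that every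
finite simple graph `H` on `n ≥ 2` vertices with minimum degree at least `h ≥ 1`
admits a collection `F` of at most `C·n·log₂ n / h` vertex-disjoint induced subgraphs
(cores) such that, with `φ = c / log₂ n`: every core is a `φ`-expander whose vertices
have degree at least `φ·h/3` inside the core and whose vertices are pairwise at
distance at most `C·log₂ n / φ` within the core; and every vertex of `H` outside all
cores is joined to the union of the cores by at least `2h/3` pairwise edge-disjoint
paths of length at most `C·log₂ n` each. -/
theorem statement5 :
    ∃ c C : ℝ, 0 < c ∧ 0 < C ∧
      ∀ (V : Type u) [Fintype V] (H : SimpleGraph V) (h : ℕ),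
        1 ≤ h → 2 ≤ Fintype.card V →
        (∀ v : V, h ≤ gdeg H v) →
        ∃ F : Finset (Finset V),
          (∀ K ∈ F, ∀ K' ∈ F, K ≠ K' → Disjoint K K') ∧
          (F.card : ℝ) ≤ C * (Fintype.card V : ℝ) * Real.logb 2 (Fintype.card V) / (h : ℝ) ∧
          (∀ K ∈ F,
            IsInducedExpander H K (c / Real.logb 2 (Fintype.card V)) ∧
            (∀ u ∈ K,
              (c / Real.logb 2 (Fintype.card V)) * (h : ℝ) / 3 ≤ (gdegIn H K u : ℝ)) ∧
            (∀ u ∈ K, ∀ v ∈ K, ∃ p : H.Walk u v, p.IsPath ∧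
              (∀ x ∈ p.support, x ∈ K) ∧
              (p.length : ℝ) ≤ C * Real.logb 2 (Fintype.card V) /
                (c / Real.logb 2 (Fintype.card V)))) ∧
          (∀ u : V, (∀ K ∈ F, u ∉ K) →
            ∃ (t : ℕ) (e : Fin t → V) (P : ∀ i : Fin t, H.Walk u (e i)),
              (2 * (h : ℝ)) / 3 ≤ (t : ℝ) ∧
              (∀ i : Fin t, (P i).IsPath ∧
                ((P i).length : ℝ) ≤ C * Real.logb 2 (Fintype.card V) ∧
                ∃ K ∈ F, e i ∈ K) ∧
              (∀ i j : Fin t, i ≠ j →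
                ∀ ed ∈ (P i).edges, ed ∉ (P j).edges)) := by
  classical
  refine ⟨1/100000, 3000, by norm_num, by norm_num, ?_⟩
  intro V _inst H h hh hcard hmin
  classical
  set L := Real.logb 2 (Fintype.card V : ℝ) with hLdef
  have hn2R : (2:ℝ) ≤ (Fintype.card V : ℝ) := by exact_mod_cast hcard
  have hnpos : (0:ℝ) < (Fintype.card V : ℝ) := by linarith
  have hL1 : 1 ≤ L := by
    rw [hLdef, ← Real.logb_self_eq_one (b := 2) one_lt_two]
    exact (Real.logb_le_logb one_lt_two (by norm_num) (by linarith)).mpr hn2R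
  have hLpos : (0:ℝ) < L := by linarith
  have h2L : (2:ℝ)^L = (Fintype.card V : ℝ) := by
    rw [hLdef]; exact Real.rpow_logb (by norm_num) (by norm_num) hnpos
  have hn2L : ∀ m : ℕ, 1 ≤ m → m ≤ Fintype.card V * Fintype.card V →
      Real.logb 2 (m:ℝ) ≤ 2 * L := by
    intro m h1 h2
    have hmR : (m:ℝ) ≤ ((Fintype.card V:ℝ))^2 := by
      have he : ((Fintype.card V * Fintype.card V : ℕ):ℝ) = ((Fintype.card V:ℝ))^2 := by
        push_cast; ring
      rw [← he]; exact_mod_cast h2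
    have h1R : (0:ℝ) < (m:ℝ) := by exact_mod_cast h1
    calc Real.logb 2 (m:ℝ) ≤ Real.logb 2 (((Fintype.card V:ℝ))^2) :=
          (Real.logb_le_logb one_lt_two h1R (by positivity)).mpr hmR
      _ = 2 * L := by rw [Real.logb_pow, hLdef]; norm_num
  have hdiamconst : 3000 * L / ((1/100000)/L) = 300000000 * L^2 := by
    field_simp; ring
  by_cases hreg : (h:ℝ) ≤ 300000 * L
  · -- EASY REGIME
    exact easy_regime H h hh hmin L hL1 hreg
  · -- HARD REGIME
    push_neg at hreg
    exact hard_regime H h hh hmin L hL1 h2L hn2L hreg
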